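/- arXiv:math/9406217 — 3 statements merged into one kernel-verified Lean document; each statement's English description precedes it below -/
import Mathlib

section
/- Let K be a metric space, f : K → ℂ a bounded function, n a positive integer, and x ∈ K. Then osc_n f(x) = sup{ Σ_{i=1}^k ε_i : 1 ≤ k ≤ n, ε_i > 0 for all 1 ≤ i ≤ k, and x ∈ os_k(f,(ε_i)) }, where the supremum of the empty set is taken to be 0. -/
open Filter Set Topology ENNReal

noncomputable section

universe u v

/-- The `ℓ¹`-type bound `sup_k Σ_j |φ_j(k)|` of a sequence of functions, in `ℝ≥0∞`. -/
def DBound {K : Type u} [MetricSpace K] (φ : ℕ → K → ℂ) : ℝ≥0∞ :=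
  ⨆ k : K, ∑' j : ℕ, (‖φ j k‖₊ : ℝ≥0∞)

/-- `φ` is a sequence of continuous functions summing pointwise to `f`. -/
def IsDRep {K : Type u} [MetricSpace K] (f : K → ℂ) (φ : ℕ → K → ℂ) : Prop :=
  (∀ j, Continuous (φ j)) ∧ ∀ k, HasSum (fun j => φ j k) (f k)

/-- `f` belongs to `D(K)`: it has a representing sequence with finite bound. -/
def MemD {K : Type u} [MetricSpace K] (f : K → ℂ) : Prop :=
  ∃ φ : ℕ → K → ℂ, IsDRep f φ ∧ DBound φ < ⊤

/-- The `D`-norm of `f`, equal to `⊤` when `f ∉ D(K)`. -/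
def DNorm {K : Type u} [MetricSpace K] (f : K → ℂ) : ℝ≥0∞ :=
  ⨅ (φ : ℕ → K → ℂ) (_ : IsDRep f φ), DBound φ

/-- The quotient `D`-seminorm: distance in `D`-norm to the bounded continuous functions. -/
def qDNorm {K : Type u} [MetricSpace K] (f : K → ℂ) : ℝ≥0∞ :=
  ⨅ (φ : K → ℂ) (_ : Continuous φ ∧ ∃ C : ℝ, ∀ k, ‖φ k‖ ≤ C), DNorm (f - φ)

/-- Upper semicontinuous envelope of `g`, computed relative to the subspace `L`. -/
def uscEnvWithin {K : Type u} [MetricSpace K] (L : Set K) (g : K → ℝ≥0∞) (x : K) : ℝ≥0∞ :=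
  ⨅ U ∈ 𝓝 x, ⨆ y ∈ U ∩ L, g y

/-- `limsup_{y→x, y ∈ L} (|f(y) - f(x)| + g(y))` (non-exclusive limsup, relative to `L`). -/
def toscSuccWithin {K : Type u} [MetricSpace K] (f : K → ℂ) (L : Set K)
    (g : K → ℝ≥0∞) (x : K) : ℝ≥0∞ :=
  ⨅ U ∈ 𝓝 x, ⨆ y ∈ U ∩ L, ((‖f y - f x‖₊ : ℝ≥0∞) + g y)

/-- The finite oscillations `osc_n (f|_L)` of `f` restricted to `L`. -/
def oscNWithin {K : Type u} [MetricSpace K] (f : K → ℂ) (L : Set K) : ℕ → K → ℝ≥0∞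
  | 0 => fun _ => 0
  | n + 1 => uscEnvWithin L (toscSuccWithin f L (oscNWithin f L n))

/-- The oscillation `osc (f|_L)` of `f` restricted to `L`. -/
def oscWithin {K : Type u} [MetricSpace K] (f : K → ℂ) (L : Set K) : K → ℝ≥0∞ :=
  oscNWithin f L 1

/-- The finite oscillations `osc_n f`. -/
def oscN {K : Type u} [MetricSpace K] (f : K → ℂ) (n : ℕ) : K → ℝ≥0∞ :=
  oscNWithin f Set.univ n

/-- `osc_ω (f|_L)`: the usc envelope (relative to `L`) of `sup_n osc_n (f|_L)`. -/
def oscOmegaWithin {K : Type u} [MetricSpace K] (f : K → ℂ) (L : Set K) : K → ℝ≥0∞ :=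
  uscEnvWithin L (fun x => ⨆ n : ℕ, oscNWithin f L n x)

/-- `osc_ω f`. -/
def oscOmega {K : Type u} [MetricSpace K] (f : K → ℂ) : K → ℝ≥0∞ :=
  oscOmegaWithin f Set.univ

/-- `osc_{ω+1} (f|_L)`. -/
def oscOmegaSuccWithin {K : Type u} [MetricSpace K] (f : K → ℂ) (L : Set K) : K → ℝ≥0∞ :=
  uscEnvWithin L (toscSuccWithin f L (oscOmegaWithin f L))

/-- The oscillation sets `os_n(f, (ε_i))` (here `ε : ℕ → ℝ` is 0-indexed, so `ε 0 = ε_1`). -/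
def osSets {K : Type u} [MetricSpace K] (f : K → ℂ) (ε : ℕ → ℝ) : ℕ → Set K
  | 0 => Set.univ
  | n + 1 => {x ∈ osSets f ε n | ENNReal.ofReal (ε n) ≤ oscWithin f (osSets f ε n) x}

/-- The `ε`-Baire index `i_B(f, ε) = sup {n : os_n(f,ε) ≠ ∅} ∈ ℕ∞`. -/
def baireIndexE {K : Type u} [MetricSpace K] (f : K → ℂ) (ε : ℝ) : ℕ∞ :=
  ⨆ (n : ℕ) (_ : (osSets f (fun _ => ε) n).Nonempty), (n : ℕ∞)

/-- The Baire index `i_B(f) = sup_{ε > 0} i_B(f,ε)`. -/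
def baireIndexTotal {K : Type u} [MetricSpace K] (f : K → ℂ) : ℕ∞ :=
  ⨆ (ε : ℝ) (_ : 0 < ε), baireIndexE f ε

/-- The sets `os_n(f, ω, ε)` defined using `osc_ω` of successive restrictions. -/
def osOmegaSets {K : Type u} [MetricSpace K] (f : K → ℂ) (ε : ℝ≥0∞) : ℕ → Set K
  | 0 => Set.univ
  | n + 1 => {x ∈ osOmegaSets f ε n | ε ≤ oscOmegaWithin f (osOmegaSets f ε n) x}

/-- The index `i(f, ω, ε)`, valued in `ℝ≥0∞`. -/
def iOmega {K : Type u} [MetricSpace K] (f : K → ℂ) (ε : ℝ≥0∞) : ℝ≥0∞ :=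
  ⨆ (n : ℕ) (_ : (osOmegaSets f ε n).Nonempty), (n : ℝ≥0∞)

/-- The transfinite oscillations `osc_β f`. -/
def oscOrd {K : Type u} [MetricSpace K] (f : K → ℂ) (β : Ordinal.{v}) : K → ℝ≥0∞ :=
  Ordinal.limitRecOn β (fun _ => 0)
    (fun _ ih => uscEnvWithin Set.univ (toscSuccWithin f Set.univ ih))
    (fun γ _ ih => uscEnvWithin Set.univ (fun x => ⨆ (α : Ordinal) (h : α < γ), ih α h x))

/-- The weight of a topological space: least cardinality of a basis. -/
def tweight (K : Type u) [TopologicalSpace K] : Cardinal.{u} :=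
  ⨅ (B : Set (Set K)) (_ : TopologicalSpace.IsTopologicalBasis B), Cardinal.mk B

/-- `f` belongs to `B_{1/4}(K)`. -/
def MemB14 {K : Type u} [MetricSpace K] (f : K → ℂ) : Prop :=
  ∃ (g : ℕ → K → ℂ) (lam : ℝ≥0∞), lam < ⊤ ∧
    (∀ n, MemD (g n) ∧ DNorm (g n) ≤ lam) ∧ TendstoUniformly g f atTop

/-- The `B_{1/4}`-norm of `f`. -/
def B14Norm {K : Type u} [MetricSpace K] (f : K → ℂ) : ℝ≥0∞ :=
  ⨅ (lam : ℝ≥0∞) (_ : ∃ g : ℕ → K → ℂ,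
    (∀ n, MemD (g n) ∧ DNorm (g n) ≤ lam) ∧ TendstoUniformly g f atTop), lam

/-- `f` belongs to `SD(K)`: the closure in `D`-norm of the simple `D`-functions. -/
def MemSD {K : Type u} [MetricSpace K] (f : K → ℂ) : Prop :=
  MemD f ∧ ∀ ε : ℝ≥0∞, 0 < ε →
    ∃ φ : K → ℂ, (Set.range φ).Finite ∧ MemD φ ∧ DNorm (f - φ) < ε

/-- The algebra of sets generated by the open subsets of `K`. -/
inductive DAlg (K : Type u) [TopologicalSpace K] : Set K → Prop
  | basic (U : Set K) : IsOpen U → DAlg K U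
  | compl (A : Set K) : DAlg K A → DAlg K Aᶜ
  | union (A B : Set K) : DAlg K A → DAlg K B → DAlg K (A ∪ B)

/-- `W` is a difference of two closed sets. -/
def IsDCS {K : Type u} [TopologicalSpace K] (W : Set K) : Prop :=
  ∃ A B : Set K, IsClosed A ∧ IsClosed B ∧ W = A \ B

/-- The boundary of `A ∩ L` relative to the subspace `L`. -/
def relBoundary {K : Type u} [TopologicalSpace K] (L A : Set K) : Set K :=
  L ∩ closure (A ∩ L) ∩ closure (L \ A)

/-- The iterated boundaries `∂^n A` (with `∂^0 A = K`). -/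
def iterBoundary {K : Type u} [TopologicalSpace K] (A : Set K) : ℕ → Set K
  | 0 => Set.univ
  | n + 1 => relBoundary (iterBoundary A n) A

/-- The Baire index `i(A)` of a set: the largest `n` with `∂^n A ≠ ∅`. -/
def setIndex {K : Type u} [TopologicalSpace K] (A : Set K) : ℕ∞ :=
  ⨆ (n : ℕ) (_ : (iterBoundary A n).Nonempty), (n : ℕ∞)

/-- The iterated derived sets `K^{(n)}` of the space `K`. -/
def derivedIter (K : Type u) [TopologicalSpace K] : ℕ → Set K
  | 0 => Set.univ
  | n + 1 => {x | AccPt x (Filter.principal (derivedIter K n))}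

end


noncomputable section StmtAux
universe u
variable {K : Type u} [MetricSpace K]


def infSup (L : Set K) (F : K → ℝ≥0∞) (x : K) : ℝ≥0∞ :=
  ⨅ U ∈ 𝓝 x, ⨆ y ∈ U ∩ L, F y

theorem le_infSup_of {L : Set K} {F : K → ℝ≥0∞} {x : K} {c : ℝ≥0∞}
    (h : ∀ U ∈ 𝓝 x, ∃ y ∈ U ∩ L, c ≤ F y) : c ≤ infSup L F x := by
  refine le_iInf₂ fun U hU => ?_
  obtain ⟨y, hy, hc⟩ := h U hU
  exact hc.trans (le_iSup₂ (f := fun y _ => F y) y hy)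

theorem exists_of_lt_infSup {L : Set K} {F : K → ℝ≥0∞} {x : K} {c : ℝ≥0∞}
    (h : c < infSup L F x) {U : Set K} (hU : U ∈ 𝓝 x) :
    ∃ y ∈ U ∩ L, c < F y := by
  have h2 : c < ⨆ y ∈ U ∩ L, F y := h.trans_le (iInf₂_le U hU)
  obtain ⟨y, hy⟩ := lt_iSup_iff.mp h2
  obtain ⟨hyU, hc⟩ := lt_iSup_iff.mp hy
  exact ⟨y, hyU, hc⟩

theorem infSup_le_of {L : Set K} {F : K → ℝ≥0∞} {x : K} {c : ℝ≥0∞} {U : Set K}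
    (hU : U ∈ 𝓝 x) (h : ∀ y ∈ U ∩ L, F y ≤ c) : infSup L F x ≤ c :=
  (iInf₂_le U hU).trans (iSup₂_le h)

theorem self_le_infSup {L : Set K} {F : K → ℝ≥0∞} {x : K} (hx : x ∈ L) :
    F x ≤ infSup L F x :=
  le_iInf₂ fun _U hU => le_iSup₂ (f := fun y _ => F y) x ⟨mem_of_mem_nhds hU, hx⟩

theorem infSup_mono_fun {L : Set K} {F G : K → ℝ≥0∞} {x : K}
    (h : ∀ y ∈ L, F y ≤ G y) : infSup L F x ≤ infSup L G x :=
  iInf₂_mono fun U _ => iSup₂_mono fun y hy => h y hy.2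

theorem infSup_mono_set {L L' : Set K} {F : K → ℝ≥0∞} {x : K} (h : L ⊆ L') :
    infSup L F x ≤ infSup L' F x :=
  iInf₂_mono fun U _ => iSup_le fun y => iSup_le fun hy =>
    le_iSup₂ (f := fun y _ => F y) y ⟨hy.1, h hy.2⟩

theorem isClosed_le_infSup {L : Set K} {F : K → ℝ≥0∞} {c : ℝ≥0∞} :
    IsClosed {x | c ≤ infSup L F x} := by
  rw [← isOpen_compl_iff, isOpen_iff_forall_mem_open]
  intro x hx
  simp only [Set.mem_compl_iff, Set.mem_setOf_eq, not_le] at hx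
  have : ∃ U ∈ 𝓝 x, (⨆ y ∈ U ∩ L, F y) < c := by
    simpa [infSup, iInf_lt_iff] using hx
  obtain ⟨U, hU, hsup⟩ := this
  refine ⟨interior U, fun z hz => ?_, isOpen_interior, mem_interior_iff_mem_nhds.2 hU⟩
  simp only [Set.mem_compl_iff, Set.mem_setOf_eq, not_le]
  refine lt_of_le_of_lt (infSup_le_of (isOpen_interior.mem_nhds hz) fun y hy => ?_) hsup
  exact le_iSup₂ (f := fun y _ => F y) y ⟨interior_subset hy.1, hy.2⟩

theorem le_infSup_add_const {L : Set K} {F : K → ℝ≥0∞} {x : K} (c : ℝ≥0∞) (hx : x ∈ L) :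
    infSup L F x + c ≤ infSup L (fun y => F y + c) x := by
  refine le_iInf₂ fun U hU => ?_
  rw [← ENNReal.biSup_add (⟨x, mem_of_mem_nhds hU, hx⟩ : (U ∩ L).Nonempty) F]
  exact add_le_add_left (iInf₂_le U hU) c


section OscLemmas
variable (f : K → ℂ)

theorem oscWithin_eq (L : Set K) :
    oscWithin f L = infSup L (toscSuccWithin f L (fun _ => 0)) := rfl

theorem toscSuccWithin_eq (L : Set K) (g : K → ℝ≥0∞) (x : K) :
    toscSuccWithin f L g x = infSup L (fun y => ((‖f y - f x‖₊ : ℝ≥0∞) + g y)) x := rfl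

theorem oscN_succ_eq (m : ℕ) :
    oscN f (m + 1) = infSup Set.univ (toscSuccWithin f Set.univ (oscN f m)) := rfl

theorem oscN_zero (x : K) : oscN f 0 x = 0 := rfl

theorem oscWithin_mono_set {L L' : Set K} (h : L ⊆ L') (x : K) :
    oscWithin f L x ≤ oscWithin f L' x := by
  rw [oscWithin_eq, oscWithin_eq]
  refine le_trans (infSup_mono_fun fun y _ => ?_) (infSup_mono_set h)
  rw [toscSuccWithin_eq, toscSuccWithin_eq]
  exact infSup_mono_set h

theorem isClosed_oscWithin_superlevel (L : Set K) (c : ℝ≥0∞) :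
    IsClosed {x | c ≤ oscWithin f L x} := by
  rw [oscWithin_eq]; exact isClosed_le_infSup

theorem oscWithin_le_bound {C : ℝ} (hC : 0 ≤ C) (hf : ∀ k, ‖f k‖ ≤ C) (L : Set K) (x : K) :
    oscWithin f L x ≤ ENNReal.ofReal (2 * C) := by
  rw [oscWithin_eq]
  refine infSup_le_of (Filter.univ_mem) fun y _ => ?_
  rw [toscSuccWithin_eq]
  refine infSup_le_of (Filter.univ_mem) fun z _ => ?_
  rw [add_zero, ← enorm_eq_nnnorm, ← ofReal_norm]
  refine ENNReal.ofReal_le_ofReal ?_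
  calc ‖f z - f y‖ ≤ ‖f z‖ + ‖f y‖ := norm_sub_le _ _
    _ ≤ 2 * C := by have := hf z; have := hf y; linarith

theorem osSets_zero (ε : ℕ → ℝ) : osSets f ε 0 = Set.univ := rfl

theorem osSets_succ (ε : ℕ → ℝ) (k : ℕ) :
    osSets f ε (k + 1)
      = {x ∈ osSets f ε k | ENNReal.ofReal (ε k) ≤ oscWithin f (osSets f ε k) x} := rfl

theorem isClosed_osSets (ε : ℕ → ℝ) (k : ℕ) : IsClosed (osSets f ε k) := by
  induction k with
  | zero => exact isClosed_univ
  | succ k ih =>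
    have : osSets f ε (k+1) = osSets f ε k ∩ {x | ENNReal.ofReal (ε k) ≤ oscWithin f (osSets f ε k) x} := rfl
    rw [this]
    exact ih.inter (isClosed_oscWithin_superlevel f _ _)

theorem osSets_succ_subset (ε : ℕ → ℝ) (k : ℕ) : osSets f ε (k + 1) ⊆ osSets f ε k :=
  fun _ h => h.1

theorem osSets_subset (ε : ℕ → ℝ) {j k : ℕ} (h : j ≤ k) : osSets f ε k ⊆ osSets f ε j := by
  induction k with
  | zero => simp_all
  | succ k ih =>
    rcases Nat.lt_or_ge j (k+1) with h' | h'
    · exact (osSets_succ_subset f ε k).trans (ih (Nat.lt_succ_iff.mp h'))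
    · have : j = k + 1 := le_antisymm h h'
      subst this; exact subset_rfl

theorem osSets_congr {ε ε' : ℕ → ℝ} {k : ℕ} (h : ∀ i < k, ε i = ε' i) :
    osSets f ε k = osSets f ε' k := by
  induction k with
  | zero => rfl
  | succ k ih =>
    have hk : osSets f ε k = osSets f ε' k := ih fun i hi => h i (hi.trans (Nat.lt_succ_self k))
    show osSets f ε k ∩ _ = osSets f ε' k ∩ _
    rw [hk, h k (Nat.lt_succ_self k)]

theorem osSets_anti {ε ε' : ℕ → ℝ} {k : ℕ} (h : ∀ i < k, ε' i ≤ ε i) :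
    osSets f ε k ⊆ osSets f ε' k := by
  induction k with
  | zero => exact subset_rfl
  | succ k ih =>
    have hsub : osSets f ε k ⊆ osSets f ε' k := ih fun i hi => h i (hi.trans (Nat.lt_succ_self k))
    rintro x ⟨hx, hosc⟩
    refine ⟨hsub hx, le_trans ?_ ((oscWithin_mono_set f hsub x).trans' hosc)⟩
    exact ENNReal.ofReal_le_ofReal (h k (Nat.lt_succ_self k))

theorem osSets_sum_le_oscN (ε : ℕ → ℝ) (k : ℕ) :
    ∀ y ∈ osSets f ε k, (∑ i ∈ Finset.range k, ENNReal.ofReal (ε i)) ≤ oscN f k y := by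
  induction k with
  | zero => intro y _; simp
  | succ k ih =>
    rintro y ⟨hyL, hosc⟩
    set L := osSets f ε k with hL
    set S := ∑ i ∈ Finset.range k, ENNReal.ofReal (ε i) with hS
    have key : ∀ w ∈ L, toscSuccWithin f Set.univ (oscN f k) w
        ≥ toscSuccWithin f L (fun _ => 0) w + S := by
      intro w hw
      rw [toscSuccWithin_eq, toscSuccWithin_eq]
      calc infSup L (fun z => (‖f z - f w‖₊ : ℝ≥0∞) + 0) w + S
          ≤ infSup L (fun z => ((‖f z - f w‖₊ : ℝ≥0∞) + 0) + S) w :=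
            le_infSup_add_const S hw
        _ ≤ infSup L (fun z => (‖f z - f w‖₊ : ℝ≥0∞) + oscN f k z) w := by
            refine infSup_mono_fun fun z hz => ?_
            rw [add_zero, add_comm ((‖f z - f w‖₊ : ℝ≥0∞)) S]
            exact add_le_add_left (ih z hz) _ |>.trans_eq (add_comm _ _) |>.trans (le_refl _)
        _ ≤ infSup Set.univ (fun z => (‖f z - f w‖₊ : ℝ≥0∞) + oscN f k z) w :=
            infSup_mono_set (Set.subset_univ L)
    calc ∑ i ∈ Finset.range (k+1), ENNReal.ofReal (ε i)
        = S + ENNReal.ofReal (ε k) := by rw [Finset.sum_range_succ]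
      _ ≤ S + oscWithin f L y := add_le_add_right hosc S
      _ = oscWithin f L y + S := add_comm _ _
      _ ≤ infSup L (toscSuccWithin f L (fun _ => 0)) y + S := by rw [oscWithin_eq]
      _ ≤ infSup L (fun w => toscSuccWithin f L (fun _ => 0) w + S) y :=
          le_infSup_add_const S hyL
      _ ≤ infSup L (toscSuccWithin f Set.univ (oscN f k)) y :=
          infSup_mono_fun fun w hw => key w hw
      _ ≤ infSup Set.univ (toscSuccWithin f Set.univ (oscN f k)) y :=
          infSup_mono_set (Set.subset_univ L)
      _ = oscN f (k+1) y := by rw [oscN_succ_eq]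

theorem oscN_le_succ : ∀ (m : ℕ) (x : K), oscN f m x ≤ oscN f (m+1) x := by
  intro m
  induction m with
  | zero => intro x; simp [oscN_zero]
  | succ m ih =>
    intro x
    rw [oscN_succ_eq, oscN_succ_eq]
    refine infSup_mono_fun fun y _ => ?_
    rw [toscSuccWithin_eq, toscSuccWithin_eq]
    exact infSup_mono_fun fun z _ => add_le_add_right (ih z) _

theorem oscN_mono {m m' : ℕ} (h : m ≤ m') (x : K) : oscN f m x ≤ oscN f m' x := by
  induction m' with
  | zero => simp_all
  | succ m' ih =>
    rcases Nat.lt_or_ge m (m'+1) with h' | h'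
    · exact (ih (Nat.lt_succ_iff.mp h')).trans (oscN_le_succ f m' x)
    · have : m = m' + 1 := le_antisymm h h'
      subst this; exact le_refl _

theorem osSets_eps_le {C : ℝ} (hC : 0 ≤ C) (hf : ∀ k, ‖f k‖ ≤ C) {ε : ℕ → ℝ} {k i : ℕ}
    (hi : i < k) {x : K} (hx : x ∈ osSets f ε k) : ε i ≤ 2 * C := by
  have hx' : x ∈ osSets f ε (i+1) := osSets_subset f ε hi hx
  obtain ⟨-, hosc⟩ := hx'
  have h2 := hosc.trans (oscWithin_le_bound f hC hf _ x)
  exact (ENNReal.ofReal_le_ofReal_iff (by linarith)).mp h2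

theorem osSets_compress (k : ℕ) (ε : ℕ → ℝ) :
    ∃ k' ≤ k, ∃ ε' : ℕ → ℝ, (∀ i < k', 0 < ε' i) ∧
      (∑ i ∈ Finset.range k, max (ε i) 0) ≤ ∑ i ∈ Finset.range k', ε' i ∧
      osSets f ε k ⊆ osSets f ε' k' := by
  induction k with
  | zero => exact ⟨0, le_refl _, fun _ => 1, by simp, by simp, subset_rfl⟩
  | succ k ih =>
    obtain ⟨k', hk', ε', hpos, hsum, hsub⟩ := ih
    rcases le_or_gt (ε k) 0 with hε | hε
    · refine ⟨k', hk'.trans (Nat.le_succ k), ε', hpos, ?_, (osSets_succ_subset f ε k).trans hsub⟩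
      rw [Finset.sum_range_succ, max_eq_right hε, add_zero]; exact hsum
    · refine ⟨k' + 1, Nat.succ_le_succ hk', fun i => if i = k' then ε k else ε' i, ?_, ?_, ?_⟩
      · intro i hi
        rcases Nat.lt_or_ge i k' with h | h
        · simp only [if_neg (Nat.ne_of_lt h)]; exact hpos i h
        · have hik : i = k' := le_antisymm (Nat.lt_succ_iff.mp hi) h
          simp only [if_pos hik]; exact hε
      · rw [Finset.sum_range_succ, Finset.sum_range_succ, max_eq_left hε.le, if_pos rfl]
        have heq : ∑ i ∈ Finset.range k', (if i = k' then ε k else ε' i)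
            = ∑ i ∈ Finset.range k', ε' i :=
          Finset.sum_congr rfl fun i hi => by
            simp [Nat.ne_of_lt (Finset.mem_range.mp hi)]
        rw [heq]; exact add_le_add_left hsum _
      · rintro x ⟨hx, hosc⟩
        have hCeq : osSets f (fun i => if i = k' then ε k else ε' i) k' = osSets f ε' k' :=
          osSets_congr f fun i hi => by simp [Nat.ne_of_lt hi]
        refine ⟨by rw [hCeq]; exact hsub hx, ?_⟩
        rw [hCeq]
        simp only [if_pos rfl]
        exact hosc.trans (oscWithin_mono_set f hsub x)

theorem mem_of_seq_closed {A : Set K} (hA : IsClosed A) {x : K} {w : ℕ → K}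
    {Q : Set ℕ} (hQ : Q.Infinite) (hw : ∀ q ∈ Q, w q ∈ A)
    (hd : ∀ q : ℕ, dist (w q) x < 1/(q+1)) : x ∈ A := by
  rw [← hA.closure_eq, Metric.mem_closure_iff]
  intro r hr
  obtain ⟨n, hn⟩ := exists_nat_one_div_lt hr
  obtain ⟨q, hqQ, hq⟩ := hQ.exists_gt n
  refine ⟨w q, hw q hqQ, ?_⟩
  rw [dist_comm]
  calc dist (w q) x < 1/(q+1) := hd q
    _ ≤ 1/(n+1) := by
        apply one_div_le_one_div_of_le
        · positivity
        · push_cast; have : (n:ℝ) < q := Nat.cast_lt.mpr hq; linarith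
    _ < r := hn

theorem exists_mem_nhds_seq {U : Set K} {x : K} (hU : U ∈ 𝓝 x) {w : ℕ → K} {Q : Set ℕ}
    (hQ : Q.Infinite) (hd : ∀ q, dist (w q) x < 1/(q+1)) : ∃ q ∈ Q, w q ∈ U := by
  obtain ⟨r, hr, hball⟩ := Metric.mem_nhds_iff.mp hU
  obtain ⟨n, hn⟩ := exists_nat_one_div_lt hr
  obtain ⟨q, hqQ, hq⟩ := hQ.exists_gt n
  refine ⟨q, hqQ, hball ?_⟩
  rw [Metric.mem_ball]
  calc dist (w q) x < 1/(q+1) := hd q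
    _ ≤ 1/(n+1) := by
        apply one_div_le_one_div_of_le
        · positivity
        · push_cast; have : (n:ℝ) < q := Nat.cast_lt.mpr hq; linarith
    _ < r := hn

theorem stmt12_step {C : ℝ} (hC : 0 ≤ C) (hf : ∀ k, ‖f k‖ ≤ C) (m : ℕ)
    (IH : ∀ (x : K) (s : ℝ), ENNReal.ofReal s < oscN f m x →
      ∃ k, k ≤ m ∧ ∃ ε : ℕ → ℝ, (∀ i < k, 0 ≤ ε i) ∧ s < ∑ i ∈ Finset.range k, ε i ∧
        x ∈ osSets f ε k)
    (y : K) {s' δ : ℝ} (hs' : 0 ≤ s') (hδ : 0 < δ)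
    (hy : ENNReal.ofReal s' < toscSuccWithin f Set.univ (oscN f m) y) :
    ∃ k, k ≤ m + 1 ∧ ∃ d : ℕ → ℕ, (∀ i, d i ≤ ⌊2*C/δ⌋₊ + ⌊s'/δ⌋₊) ∧
      s' - (m+3)*δ < ∑ i ∈ Finset.range k, δ * d i ∧
      y ∈ osSets f (fun i => δ * d i) k := by
  classical
  have main : ∀ q : ℕ, ∃ z : K, dist z y < 1/(q+1) ∧ ∃ k, k ≤ m ∧ ∃ ε : ℕ → ℝ,
      (∀ i < k, 0 ≤ ε i) ∧ s' - ‖f z - f y‖ - δ < ∑ i ∈ Finset.range k, ε i ∧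
      z ∈ osSets f ε k := by
    intro q
    have h1 : (0:ℝ) < 1/(q+1) := by positivity
    rw [toscSuccWithin_eq] at hy
    obtain ⟨z, hzU, hz⟩ := exists_of_lt_infSup hy (Metric.ball_mem_nhds y h1)
    refine ⟨z, by simpa [Metric.mem_ball] using hzU.1, ?_⟩
    set b := ‖f z - f y‖ with hbdef
    rcases lt_or_ge (s' - b - δ) 0 with hneg | hpos
    · exact ⟨0, Nat.zero_le m, fun _ => 0, by simp, by simpa using hneg, Set.mem_univ z⟩
    · have hb0 : 0 ≤ b := norm_nonneg _
      have h2 : ENNReal.ofReal (s' - b) ≤ oscN f m z := by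
        rw [ENNReal.ofReal_sub _ hb0, tsub_le_iff_left, ofReal_norm, enorm_eq_nnnorm]
        exact hz.le
      have hzosc : ENNReal.ofReal (s' - b - δ) < oscN f m z := by
        refine lt_of_lt_of_le ?_ h2
        rw [ENNReal.ofReal_lt_ofReal_iff (by linarith)]
        linarith
      exact IH z _ hzosc
  choose z hdist kk hkm ε hεnn hεsum hεmem using main
  set N₁ := ⌊2*C/δ⌋₊ with hN₁def
  set c : ℕ → ℕ → ℕ := fun q i => ⌊ε q i / δ⌋₊ with hcdef
  have hcN : ∀ q, ∀ i, i < kk q → c q i ≤ N₁ := by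
    intro q i hi
    refine Nat.floor_mono ?_
    have h2C : ε q i ≤ 2*C := osSets_eps_le f hC hf hi (hεmem q)
    gcongr
  have hηle : ∀ q, ∀ i, i < kk q → δ * c q i ≤ ε q i := by
    intro q i hi
    have h0 : 0 ≤ ε q i / δ := div_nonneg (hεnn q i hi) hδ.le
    calc δ * (c q i : ℝ) ≤ δ * (ε q i / δ) :=
          mul_le_mul_of_nonneg_left (Nat.floor_le h0) hδ.le
      _ = ε q i := by field_simp
  have hltη : ∀ q i, ε q i < δ * c q i + δ := by
    intro q i
    have h1 : ε q i / δ < (c q i : ℝ) + 1 := by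
      exact_mod_cast Nat.lt_floor_add_one (ε q i / δ)
    calc ε q i = (ε q i / δ) * δ := by field_simp
      _ < ((c q i : ℝ) + 1) * δ := mul_lt_mul_of_pos_right h1 hδ
      _ = δ * c q i + δ := by ring
  have hmemR : ∀ q, z q ∈ osSets f (fun i => δ * c q i) (kk q) := fun q =>
    osSets_anti f (fun i hi => hηle q i hi) (hεmem q)
  let G : ℕ → Fin (m+1) × (Fin m → Fin (N₁+1)) :=
    fun q => (⟨kk q, Nat.lt_succ_of_le (hkm q)⟩,
      fun i => ⟨min (c q i) N₁, Nat.lt_succ_of_le (min_le_right _ _)⟩)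
  obtain ⟨⟨k0, cf⟩, hfib⟩ := Finite.exists_infinite_fiber G
  set Q : Set ℕ := G ⁻¹' {(k0, cf)} with hQdef
  have hQ : Q.Infinite := Set.infinite_coe_iff.mp hfib
  obtain ⟨q₀, hq₀⟩ := hQ.nonempty
  have hGq : ∀ q ∈ Q, G q = (k0, cf) := fun q hq => hq
  have hkeq : ∀ q ∈ Q, kk q = (k0 : ℕ) := fun q hq =>
    congrArg Fin.val (congrArg Prod.fst (hGq q hq))
  have hceq : ∀ q ∈ Q, ∀ i, i < kk q₀ → c q i = c q₀ i := by
    intro q hq i hi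
    have him : i < m := lt_of_lt_of_le hi (hkm q₀)
    have hkq : kk q = kk q₀ := (hkeq q hq).trans (hkeq q₀ hq₀).symm
    have h1 := congrArg Fin.val
      (congrFun (congrArg Prod.snd ((hGq q hq).trans (hGq q₀ hq₀).symm)) ⟨i, him⟩)
    simp only [G] at h1
    rwa [min_eq_left (hcN q i (hkq ▸ hi)), min_eq_left (hcN q₀ i hi)] at h1
  set k₁ := kk q₀ with hk₁def
  set cS : ℕ → ℕ := fun i => if i < k₁ then c q₀ i else 0 with hcSdef
  have hmemC : ∀ q ∈ Q, z q ∈ osSets f (fun i => δ * cS i) k₁ := by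
    intro q hq
    have hkq : kk q = k₁ := (hkeq q hq).trans (hkeq q₀ hq₀).symm
    have h1 := hmemR q
    rw [hkq] at h1
    have h2 : ∀ i, i < k₁ → δ * ((c q i : ℕ) : ℝ) = δ * (cS i : ℝ) := by
      intro i hi
      simp only [hcSdef, if_pos hi, hceq q hq i hi]
    exact (osSets_congr f h2) ▸ h1
  set CC := osSets f (fun i => δ * cS i) k₁ with hCCdef
  have hyC : y ∈ CC := mem_of_seq_closed (isClosed_osSets f _ _) hQ hmemC hdist
  set S1 : ℝ := ∑ i ∈ Finset.range k₁, δ * cS i with hS1def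
  have hS1nn : 0 ≤ S1 := Finset.sum_nonneg fun i _ => by positivity
  have hbq : ∀ q ∈ Q, s' - S1 - (m+2)*δ + δ ≤ ‖f (z q) - f y‖ := by
    intro q hq
    have hkq : kk q = k₁ := (hkeq q hq).trans (hkeq q₀ hq₀).symm
    have hsum1 : ∑ i ∈ Finset.range (kk q), ε q i ≤ S1 + k₁ * δ := by
      rw [hkq]
      calc ∑ i ∈ Finset.range k₁, ε q i ≤ ∑ i ∈ Finset.range k₁, (δ * cS i + δ) := by
            refine Finset.sum_le_sum fun i hi => ?_
            have hi' := Finset.mem_range.mp hi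
            have he : δ * (c q i : ℝ) = δ * cS i := by
              simp only [hcSdef, if_pos hi', hceq q hq i hi']
            linarith [hltη q i]
        _ = S1 + k₁ * δ := by
            rw [Finset.sum_add_distrib, Finset.sum_const, Finset.card_range, hS1def]
            push_cast; ring
    have hkm' : (k₁ : ℝ) * δ ≤ m * δ := by
      have : (k₁:ℝ) ≤ m := by exact_mod_cast hkm q₀
      nlinarith
    have := hεsum q
    linarith
  set β : ℝ := s' - S1 - (m+2)*δ with hβdef
  have hoscC : ENNReal.ofReal (β + δ) ≤ oscWithin f CC y := by
    rw [oscWithin_eq]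
    refine le_trans ?_ (self_le_infSup hyC)
    rw [toscSuccWithin_eq]
    refine le_infSup_of fun U hU => ?_
    obtain ⟨q, hqQ, hqU⟩ := exists_mem_nhds_seq hU hQ hdist
    refine ⟨z q, ⟨hqU, hmemC q hqQ⟩, ?_⟩
    rw [add_zero, ← enorm_eq_nnnorm, ← ofReal_norm]
    exact ENNReal.ofReal_le_ofReal (hbq q hqQ)
  set g : ℕ := ⌊max β 0 / δ⌋₊ with hgdef
  set d : ℕ → ℕ := fun i => if i = k₁ then g else cS i with hddef
  have hcong : ∀ i, i < k₁ → δ * (d i : ℝ) = δ * (cS i : ℝ) := fun i hi => by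
    simp only [hddef, if_neg (Nat.ne_of_lt hi)]
  have hmemD : y ∈ osSets f (fun i => δ * d i) (k₁ + 1) := by
    have hsetc : osSets f (fun i => δ * (d i : ℝ)) k₁ = CC := osSets_congr f hcong
    refine ⟨by rw [hsetc]; exact hyC, ?_⟩
    rw [hsetc]
    show ENNReal.ofReal (δ * d k₁) ≤ oscWithin f CC y
    simp only [hddef, if_pos rfl]
    rcases le_or_gt β 0 with hβ0 | hβ0
    · have hg0 : g = 0 := by
        simp [hgdef, max_eq_right hβ0]
      simp [hg0]
    · refine le_trans (ENNReal.ofReal_le_ofReal ?_) hoscC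
      have h0 : 0 ≤ β / δ := div_nonneg hβ0.le hδ.le
      have : (g : ℝ) ≤ β / δ := by
        rw [hgdef, max_eq_left hβ0.le]
        exact Nat.floor_le h0
      calc δ * (g:ℝ) ≤ δ * (β / δ) := mul_le_mul_of_nonneg_left this hδ.le
        _ = β := by field_simp
        _ ≤ β + δ := by linarith
  have hsumD : s' - (m+3)*δ < ∑ i ∈ Finset.range (k₁+1), δ * d i := by
    rw [Finset.sum_range_succ]
    have hsum_eq : ∑ i ∈ Finset.range k₁, δ * (d i : ℝ) = S1 :=
      Finset.sum_congr rfl fun i hi => hcong i (Finset.mem_range.mp hi)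
    rw [hsum_eq]
    simp only [hddef, if_pos rfl]
    rcases le_or_gt β 0 with hβ0 | hβ0
    · have hg : (0:ℝ) ≤ δ * g := by positivity
      have hβ0' : s' - S1 - (m+2)*δ ≤ 0 := hβ0
      linarith
    · have h1 : max β 0 / δ < (g : ℝ) + 1 := by
        exact_mod_cast Nat.lt_floor_add_one (max β 0 / δ)
      rw [max_eq_left hβ0.le] at h1
      have h2 : β < ((g:ℝ) + 1) * δ := by
        calc β = (β / δ) * δ := by field_simp
          _ < ((g:ℝ) + 1) * δ := mul_lt_mul_of_pos_right h1 hδ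
      have hβ0' : β = s' - S1 - (m+2)*δ := rfl
      nlinarith
  have hdbd : ∀ i, d i ≤ N₁ + ⌊s'/δ⌋₊ := by
    intro i
    rcases eq_or_ne i k₁ with rfl | hne
    · simp only [hddef, if_pos rfl]
      have hβs : max β 0 ≤ s' := by
        rcases le_or_gt β 0 with h | h
        · rw [max_eq_right h]; exact hs'
        · rw [max_eq_left h.le, hβdef]; nlinarith [hS1nn, hδ.le]
      have : g ≤ ⌊s'/δ⌋₊ := Nat.floor_mono (by gcongr)
      omega
    · simp only [hddef, if_neg hne, hcSdef]
      split
      · next h => exact (hcN q₀ _ h).trans (Nat.le_add_right _ _)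
      · exact Nat.zero_le _
  exact ⟨k₁ + 1, Nat.succ_le_succ (hkm q₀), d, hdbd, hsumD, hmemD⟩

theorem stmt12_hard {C : ℝ} (hC : 0 ≤ C) (hf : ∀ k, ‖f k‖ ≤ C) :
    ∀ (m : ℕ) (x : K) (s : ℝ), ENNReal.ofReal s < oscN f m x →
      ∃ k, k ≤ m ∧ ∃ ε : ℕ → ℝ, (∀ i < k, 0 ≤ ε i) ∧ s < ∑ i ∈ Finset.range k, ε i ∧
        x ∈ osSets f ε k := by
  intro m
  induction m with
  | zero =>
    intro x s h
    rw [oscN_zero] at h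
    exact absurd h (by simp)
  | succ m IH =>
    intro x s h
    obtain ⟨s', hs'0, hss', hs'x⟩ := ENNReal.lt_iff_exists_real_btwn.mp h
    have hs : s < s' := by
      by_contra hc
      exact absurd hss' (not_lt.mpr (ENNReal.ofReal_le_ofReal (not_lt.mp hc)))
    set δ := (s' - s)/(m+4) with hδdef
    have hδ : 0 < δ := by
      apply div_pos (by linarith)
      positivity
    have main : ∀ p : ℕ, ∃ y : K, dist y x < 1/(p+1) ∧
        ENNReal.ofReal s' < toscSuccWithin f Set.univ (oscN f m) y := by
      intro p
      have h1 : (0:ℝ) < 1/(p+1) := by positivity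
      rw [oscN_succ_eq] at hs'x
      obtain ⟨y, hyU, hy⟩ := exists_of_lt_infSup hs'x (Metric.ball_mem_nhds x h1)
      exact ⟨y, by simpa [Metric.mem_ball] using hyU.1, hy⟩
    choose y hydist hytosc using main
    have step := fun p => stmt12_step f hC hf m IH (y p) hs'0 hδ (hytosc p)
    choose kk hkm d hdbd hdsum hdmem using step
    set N := ⌊2*C/δ⌋₊ + ⌊s'/δ⌋₊ with hNdef
    let G : ℕ → Fin (m+2) × (Fin (m+1) → Fin (N+1)) :=
      fun p => (⟨kk p, Nat.lt_succ_of_le (hkm p)⟩,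
        fun i => ⟨d p i, Nat.lt_succ_of_le (hdbd p i)⟩)
    obtain ⟨⟨k0, df⟩, hfib⟩ := Finite.exists_infinite_fiber G
    set Q : Set ℕ := G ⁻¹' {(k0, df)} with hQdef
    have hQ : Q.Infinite := Set.infinite_coe_iff.mp hfib
    obtain ⟨p₀, hp₀⟩ := hQ.nonempty
    have hGp : ∀ p ∈ Q, G p = (k0, df) := fun p hp => hp
    have hkeq : ∀ p ∈ Q, kk p = (k0 : ℕ) := fun p hp =>
      congrArg Fin.val (congrArg Prod.fst (hGp p hp))
    have hdeq : ∀ p ∈ Q, ∀ i, i < kk p₀ → d p i = d p₀ i := by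
      intro p hp i hi
      have him : i < m + 1 := lt_of_lt_of_le hi (hkm p₀)
      exact congrArg Fin.val
        (congrFun (congrArg Prod.snd ((hGp p hp).trans (hGp p₀ hp₀).symm)) ⟨i, him⟩)
    set k₁ := kk p₀ with hk₁def
    set εf : ℕ → ℝ := fun i => δ * d p₀ i with hεfdef
    have hmemQ : ∀ p ∈ Q, y p ∈ osSets f εf k₁ := by
      intro p hp
      have hkq : kk p = k₁ := (hkeq p hp).trans (hkeq p₀ hp₀).symm
      have h1 := hdmem p
      rw [hkq] at h1
      have h2 : ∀ i, i < k₁ → δ * ((d p i : ℕ) : ℝ) = εf i := by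
        intro i hi
        simp only [hεfdef, hdeq p hp i hi]
      exact (osSets_congr f h2) ▸ h1
    have hx : x ∈ osSets f εf k₁ :=
      mem_of_seq_closed (isClosed_osSets f _ _) hQ hmemQ hydist
    refine ⟨k₁, hkm p₀, εf, fun i _ => by positivity, ?_, hx⟩
    have hδsum : ((m:ℝ)+3) * δ < s' - s := by
      have hδeq : δ * (m+4) = s' - s := by
        rw [hδdef]; field_simp
      nlinarith
    have := hdsum p₀
    calc s < s' - (m+3)*δ := by linarith
      _ < ∑ i ∈ Finset.range k₁, δ * d p₀ i := this
      _ = ∑ i ∈ Finset.range k₁, εf i := rfl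

end OscLemmas
end StmtAux

/-- `osc_n f(x)` equals the sup of `Σ_{i=1}^k ε_i` over `1 ≤ k ≤ n` and
positive `(ε_i)` with `x ∈ os_k(f,(ε_i))`. -/
theorem stmt12 {K : Type u} [MetricSpace K] (f : K → ℂ)
    (hb : ∃ C : ℝ, ∀ k, ‖f k‖ ≤ C) (n : ℕ) (hn : 0 < n) (x : K) :
    oscN f n x =
      ⨆ (k : ℕ) (_ : 1 ≤ k ∧ k ≤ n) (ε : ℕ → ℝ)
        (_ : (∀ i < k, 0 < ε i) ∧ x ∈ osSets f ε k),
        ENNReal.ofReal (∑ i ∈ Finset.range k, ε i) := by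
  classical
  obtain ⟨C₀, hC₀⟩ := hb
  set C := max C₀ 0 with hCdef
  have hC : 0 ≤ C := le_max_right _ _
  have hf : ∀ k, ‖f k‖ ≤ C := fun k => (hC₀ k).trans (le_max_left _ _)
  apply le_antisymm
  · refine ENNReal.le_of_forall_nnreal_lt fun r hr => ?_
    have hr' : ENNReal.ofReal (r : ℝ) < oscN f n x := by
      rwa [ENNReal.ofReal_coe_nnreal]
    obtain ⟨k, hk, ε, hnn, hsum, hmem⟩ := stmt12_hard f hC hf n x r hr'
    obtain ⟨k', hk', ε', hpos, hsum', hsub⟩ := osSets_compress f k ε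
    have hsum2 : (r:ℝ) < ∑ i ∈ Finset.range k', ε' i := by
      refine lt_of_lt_of_le ?_ hsum'
      calc (r:ℝ) < ∑ i ∈ Finset.range k, ε i := hsum
        _ ≤ ∑ i ∈ Finset.range k, max (ε i) 0 :=
            Finset.sum_le_sum fun i _ => le_max_left _ _
    have hk'1 : 1 ≤ k' := by
      by_contra hc
      have hk'0 : k' = 0 := by omega
      subst hk'0
      simp only [Finset.range_zero, Finset.sum_empty] at hsum2
      exact absurd hsum2 (not_lt.mpr r.coe_nonneg)
    have h1 : (r : ℝ≥0∞) ≤ ENNReal.ofReal (∑ i ∈ Finset.range k', ε' i) := by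
      rw [← ENNReal.ofReal_coe_nnreal]
      exact ENNReal.ofReal_le_ofReal hsum2.le
    refine h1.trans ?_
    exact le_iSup_of_le k' (le_iSup_of_le ⟨hk'1, hk'.trans hk⟩
      (le_iSup_of_le ε' (le_iSup_of_le ⟨hpos, hsub hmem⟩ (le_refl _))))
  · refine iSup_le fun k => iSup_le fun hk => iSup_le fun ε => iSup_le fun hε => ?_
    rw [ENNReal.ofReal_sum_of_nonneg (fun i hi => (hε.1 i (Finset.mem_range.mp hi)).le)]
    exact (osSets_sum_le_oscN f ε k x hε.2).trans (oscN_mono f hk.2 x)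
end

section
/- Let K be a metric space and f : K → ℂ a bounded function of finite Baire index, with n = i_B(f). Then f ∈ D(K) and osc_n f = osc_{n+1} f. In particular, if f is real-valued, then ‖f‖_D ≤ (2n+1)‖f‖_∞ and ‖f‖_{qD} ≤ n‖osc f‖_∞ ≤ 2n‖f‖_∞. -/
open Filter Set Topology ENNReal

section OscMachinery

universe u

open Filter Set Topology ENNReal

variable {K : Type u} [MetricSpace K]

namespace Stmt14Aux

/-! ### Basic envelope lemmas -/

lemma le_uscEnvWithin {L : Set K} {g : K → ℝ≥0∞} {x : K} (hx : x ∈ L) :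
    g x ≤ uscEnvWithin L g x :=
  le_iInf₂ fun U hU =>
    le_iSup₂ (f := fun y (_ : y ∈ U ∩ L) => g y) x ⟨mem_of_mem_nhds hU, hx⟩

lemma le_toscSuccWithin (f : K → ℂ) {L : Set K} {g : K → ℝ≥0∞} {x : K} (hx : x ∈ L) :
    g x ≤ toscSuccWithin f L g x := by
  refine le_iInf₂ fun U hU => ?_
  have h := le_iSup₂ (f := fun y (_ : y ∈ U ∩ L) => ((‖f y - f x‖₊ : ℝ≥0∞) + g y)) x
    ⟨mem_of_mem_nhds hU, hx⟩
  simpa using h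

lemma uscEnvWithin_mono_fun {L : Set K} {g g' : K → ℝ≥0∞} (h : ∀ y, g y ≤ g' y) (x : K) :
    uscEnvWithin L g x ≤ uscEnvWithin L g' x :=
  iInf_mono fun U => iInf_mono fun _ => iSup_mono fun y => iSup_mono fun _ => h y

lemma uscEnvWithin_le_of_open {L : Set K} (g : K → ℝ≥0∞) {U : Set K} (hU : IsOpen U)
    {y : K} (hy : y ∈ U) :
    uscEnvWithin L g y ≤ ⨆ z ∈ U ∩ L, g z :=
  iInf₂_le U (hU.mem_nhds hy)

lemma uscEnvWithin_le_const {L : Set K} {g : K → ℝ≥0∞} {c : ℝ≥0∞} (hg : ∀ y, g y ≤ c) (x : K) :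
    uscEnvWithin L g x ≤ c :=
  (iInf₂_le univ univ_mem).trans (iSup₂_le fun y _ => hg y)

lemma isClosed_le_uscEnvWithin (L : Set K) (g : K → ℝ≥0∞) (c : ℝ≥0∞) :
    IsClosed {x | c ≤ uscEnvWithin L g x} := by
  rw [← isOpen_compl_iff, isOpen_iff_mem_nhds]
  intro x hx
  simp only [mem_compl_iff, mem_setOf_eq, not_le] at hx
  obtain ⟨U, hU, hlt⟩ : ∃ U, ∃ _ : U ∈ 𝓝 x, (⨆ y ∈ U ∩ L, g y) < c := by
    simpa only [uscEnvWithin, iInf_lt_iff] using hx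
  refine mem_of_superset (interior_mem_nhds.2 hU) ?_
  intro y hy
  simp only [mem_compl_iff, mem_setOf_eq, not_le]
  refine lt_of_le_of_lt ((uscEnvWithin_le_of_open g isOpen_interior hy).trans ?_) hlt
  exact biSup_mono fun z hz => ⟨interior_subset hz.1, hz.2⟩

lemma uscEnv_uscEnv_le (g : K → ℝ≥0∞) (x : K) :
    uscEnvWithin univ (uscEnvWithin univ g) x ≤ uscEnvWithin univ g x := by
  refine le_iInf₂ fun U hU => ?_
  calc uscEnvWithin univ (uscEnvWithin univ g) x
      ≤ ⨆ y ∈ interior U ∩ univ, uscEnvWithin univ g y :=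
        uscEnvWithin_le_of_open _ isOpen_interior (mem_interior_iff_mem_nhds.2 hU)
    _ ≤ ⨆ y ∈ U ∩ univ, g y := by
        refine iSup₂_le fun y hy => ?_
        refine (uscEnvWithin_le_of_open g isOpen_interior hy.1).trans ?_
        exact biSup_mono fun z hz => ⟨interior_subset hz.1, hz.2⟩

/-! ### Two `⨅`+`⨆` combination lemmas -/

lemma biInf_nhds_add_const_le (x : K) (A : Set K → ℝ≥0∞) (c : ℝ≥0∞)
    (hA : ∀ {U V : Set K}, U ⊆ V → A U ≤ A V) :
    (⨅ U ∈ 𝓝 x, (A U + c)) ≤ (⨅ U ∈ 𝓝 x, A U) + c := by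
  refine ENNReal.le_of_forall_pos_le_add fun δ hδ hfin => ?_
  have ha : (⨅ U ∈ 𝓝 x, A U) ≠ ⊤ := by
    intro h; rw [h] at hfin; simp at hfin
  have hlt : (⨅ U ∈ 𝓝 x, A U) < (⨅ U ∈ 𝓝 x, A U) + δ :=
    ENNReal.lt_add_right ha (by exact_mod_cast hδ.ne')
  obtain ⟨U, hU, hAU⟩ : ∃ U, ∃ _ : U ∈ 𝓝 x, A U < (⨅ U ∈ 𝓝 x, A U) + δ := by
    simpa only [iInf_lt_iff] using hlt
  calc (⨅ U ∈ 𝓝 x, (A U + c)) ≤ A U + c := iInf₂_le U hU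
    _ ≤ ((⨅ U ∈ 𝓝 x, A U) + δ) + c := add_le_add_left hAU.le c
    _ = ((⨅ U ∈ 𝓝 x, A U) + c) + δ := by ring

lemma biInf_nhds_add_le (x : K) (A B : Set K → ℝ≥0∞)
    (hA : ∀ {U V : Set K}, U ⊆ V → A U ≤ A V) (hB : ∀ {U V : Set K}, U ⊆ V → B U ≤ B V) :
    (⨅ U ∈ 𝓝 x, (A U + B U)) ≤ (⨅ U ∈ 𝓝 x, A U) + (⨅ U ∈ 𝓝 x, B U) := by
  refine ENNReal.le_of_forall_pos_le_add fun δ hδ hfin => ?_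
  have ha : (⨅ U ∈ 𝓝 x, A U) ≠ ⊤ := fun h => by simp [h] at hfin
  have hb : (⨅ U ∈ 𝓝 x, B U) ≠ ⊤ := fun h => by simp [h] at hfin
  have hδ' : (δ : ℝ≥0∞) ≠ 0 := by exact_mod_cast hδ.ne'
  obtain ⟨U, hU, hAU⟩ : ∃ U, ∃ _ : U ∈ 𝓝 x, A U < (⨅ U ∈ 𝓝 x, A U) + δ / 2 := by
    simpa only [iInf_lt_iff] using
      ENNReal.lt_add_right ha (by simpa using (ENNReal.half_pos hδ').ne')
  obtain ⟨V, hV, hBV⟩ : ∃ V, ∃ _ : V ∈ 𝓝 x, B V < (⨅ U ∈ 𝓝 x, B U) + δ / 2 := by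
    simpa only [iInf_lt_iff] using
      ENNReal.lt_add_right hb (by simpa using (ENNReal.half_pos hδ').ne')
  calc (⨅ U ∈ 𝓝 x, (A U + B U)) ≤ A (U ∩ V) + B (U ∩ V) := iInf₂_le _ (inter_mem hU hV)
    _ ≤ A U + B V := add_le_add (hA inter_subset_left) (hB inter_subset_right)
    _ ≤ ((⨅ U ∈ 𝓝 x, A U) + δ / 2) + ((⨅ U ∈ 𝓝 x, B U) + δ / 2) := add_le_add hAU.le hBV.le
    _ = ((⨅ U ∈ 𝓝 x, A U) + (⨅ U ∈ 𝓝 x, B U)) + (δ / 2 + δ / 2) := by ring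
    _ = ((⨅ U ∈ 𝓝 x, A U) + (⨅ U ∈ 𝓝 x, B U)) + δ := by rw [ENNReal.add_halves]

lemma biInf_nhds_max_le (x : K) (A B : Set K → ℝ≥0∞)
    (hA : ∀ {U V : Set K}, U ⊆ V → A U ≤ A V) (hB : ∀ {U V : Set K}, U ⊆ V → B U ≤ B V) :
    (⨅ U ∈ 𝓝 x, max (A U) (B U)) ≤ max (⨅ U ∈ 𝓝 x, A U) (⨅ U ∈ 𝓝 x, B U) := by
  refine ENNReal.le_of_forall_pos_le_add fun δ hδ hfin => ?_
  have ha : (⨅ U ∈ 𝓝 x, A U) ≠ ⊤ := fun h => by simp [h] at hfin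
  have hb : (⨅ U ∈ 𝓝 x, B U) ≠ ⊤ := fun h => by simp [h] at hfin
  have hδ' : (δ : ℝ≥0∞) ≠ 0 := by exact_mod_cast hδ.ne'
  obtain ⟨U, hU, hAU⟩ : ∃ U, ∃ _ : U ∈ 𝓝 x, A U < (⨅ U ∈ 𝓝 x, A U) + δ := by
    simpa only [iInf_lt_iff] using ENNReal.lt_add_right ha hδ'
  obtain ⟨V, hV, hBV⟩ : ∃ V, ∃ _ : V ∈ 𝓝 x, B V < (⨅ U ∈ 𝓝 x, B U) + δ := by
    simpa only [iInf_lt_iff] using ENNReal.lt_add_right hb hδ'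
  calc (⨅ U ∈ 𝓝 x, max (A U) (B U)) ≤ max (A (U ∩ V)) (B (U ∩ V)) :=
        iInf₂_le _ (inter_mem hU hV)
    _ ≤ max ((⨅ U ∈ 𝓝 x, A U) + δ) ((⨅ U ∈ 𝓝 x, B U) + δ) :=
        max_le_max ((hA inter_subset_left).trans hAU.le) ((hB inter_subset_right).trans hBV.le)
    _ = max (⨅ U ∈ 𝓝 x, A U) (⨅ U ∈ 𝓝 x, B U) + δ := (max_add_add_right _ _ _)

/-! ### Basic `oscN` lemmas -/

lemma oscN_zero (f : K → ℂ) : oscN f 0 = fun _ => 0 := rfl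

lemma oscN_succ (f : K → ℂ) (m : ℕ) :
    oscN f (m + 1) = uscEnvWithin univ (toscSuccWithin f univ (oscN f m)) := rfl

lemma toscSucc_le_oscN_succ (f : K → ℂ) (m : ℕ) (x : K) :
    toscSuccWithin f univ (oscN f m) x ≤ oscN f (m + 1) x :=
  le_uscEnvWithin (mem_univ x)

lemma oscN_le_succ (f : K → ℂ) (m : ℕ) (x : K) : oscN f m x ≤ oscN f (m + 1) x :=
  (le_toscSuccWithin f (mem_univ x)).trans (toscSucc_le_oscN_succ f m x)

lemma uscEnv_oscN_le (f : K → ℂ) (m : ℕ) (x : K) :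
    uscEnvWithin univ (oscN f m) x ≤ oscN f m x := by
  cases m with
  | zero => exact uscEnvWithin_le_const (fun y => le_rfl) x
  | succ m => exact uscEnv_uscEnv_le _ x

lemma toscSuccWithin_le_bound (f : K → ℂ) {g : K → ℝ≥0∞} {S c : ℝ≥0∞}
    (hf : ∀ y, (‖f y‖₊ : ℝ≥0∞) ≤ S) (hg : ∀ y, g y ≤ c) (x : K) :
    toscSuccWithin f univ g x ≤ 2 * S + c := by
  refine (iInf₂_le univ univ_mem).trans (iSup₂_le fun y _ => ?_)
  refine add_le_add ?_ (hg y)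
  calc (‖f y - f x‖₊ : ℝ≥0∞) ≤ (‖f y‖₊ : ℝ≥0∞) + (‖f x‖₊ : ℝ≥0∞) := by
        exact_mod_cast nnnorm_sub_le (f y) (f x)
    _ ≤ S + S := add_le_add (hf y) (hf x)
    _ = 2 * S := (two_mul S).symm

lemma oscN_le_bound (f : K → ℂ) {S : ℝ≥0∞} (hf : ∀ y, (‖f y‖₊ : ℝ≥0∞) ≤ S) :
    ∀ m x, oscN f m x ≤ 2 * m * S := by
  intro m
  induction m with
  | zero => intro x; simp [oscN_zero]
  | succ m ih =>
      intro x
      have h : ∀ y, toscSuccWithin f univ (oscN f m) y ≤ 2 * S + 2 * m * S :=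
        fun y => toscSuccWithin_le_bound f hf (fun z => ih z) y
      refine (uscEnvWithin_le_const h x).trans_eq ?_
      push_cast
      ring

/-- `osSets` are closed. -/
lemma isClosed_osSets (f : K → ℂ) (ε : ℕ → ℝ) : ∀ j, IsClosed (osSets f ε j)
  | 0 => isClosed_univ
  | (j + 1) => by
      have h : osSets f ε (j + 1) =
          osSets f ε j ∩ {x | ENNReal.ofReal (ε j) ≤ oscWithin f (osSets f ε j) x} := rfl
      rw [h]
      exact (isClosed_osSets f ε j).inter
        (isClosed_le_uscEnvWithin (osSets f ε j)
          (toscSuccWithin f (osSets f ε j) (oscNWithin f (osSets f ε j) 0)) _)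

end Stmt14Aux

end OscMachinery
section MainW

universe u

open Filter Set Topology ENNReal

variable {K : Type u} [MetricSpace K]

namespace Stmt14Aux

lemma not_mem_osSets_succ {f : K → ℂ} {ε : ℝ} {j : ℕ} {x : K}
    (hx : x ∈ osSets f (fun _ => ε) j)
    (hx' : x ∉ osSets f (fun _ => ε) (j + 1)) :
    oscWithin f (osSets f (fun _ => ε) j) x < ENNReal.ofReal ε := by
  by_contra h
  exact hx' ⟨hx, not_lt.1 h⟩

/-- Extraction of a neighborhood where `f` moves by less than `ε` within `L`,
from `oscWithin f L x < ofReal ε` for `x ∈ L`. -/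
lemma exists_nhds_small_osc {f : K → ℂ} {L : Set K} {x : K} {c : ℝ≥0∞}
    (hx : x ∈ L) (h : oscWithin f L x < c) :
    ∃ U ∈ 𝓝 x, ∀ y ∈ U ∩ L, (‖f y - f x‖₊ : ℝ≥0∞) ≤ c := by
  have h1 : toscSuccWithin f L (oscNWithin f L 0) x < c :=
    lt_of_le_of_lt (le_uscEnvWithin hx) h
  obtain ⟨U, hU, hsup⟩ : ∃ U, ∃ _ : U ∈ 𝓝 x,
      (⨆ y ∈ U ∩ L, ((‖f y - f x‖₊ : ℝ≥0∞) + oscNWithin f L 0 y)) < c := by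
    simpa only [toscSuccWithin, iInf_lt_iff] using h1
  refine ⟨U, hU, fun y hy => ?_⟩
  have h2 : (‖f y - f x‖₊ : ℝ≥0∞) + oscNWithin f L 0 y ≤ _ :=
    le_iSup₂ (f := fun y (_ : y ∈ U ∩ L) => ((‖f y - f x‖₊ : ℝ≥0∞) + oscNWithin f L 0 y)) y hy
  have h3 := h2.trans_lt hsup
  have : oscNWithin f L 0 y = 0 := rfl
  rw [this, add_zero] at h3
  exact h3.le

/-- The main induction: at points outside `os_{j+1}(f,ε)`, the `(m+1)`-st transfinite
oscillation exceeds the `m`-th by at most `(j+1)ε`, whenever `j ≤ m`. -/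
lemma mainW (f : K → ℂ) {ε : ℝ} (hε : 0 < ε) :
    ∀ j m : ℕ, j ≤ m → ∀ x : K, x ∉ osSets f (fun _ => ε) (j + 1) →
      toscSuccWithin f univ (oscN f m) x
        ≤ oscN f m x + ((j : ℝ≥0∞) + 1) * ENNReal.ofReal ε := by
  intro j
  induction j with
  | zero =>
      intro m _ x hx
      have hx0 : x ∈ osSets f (fun _ => ε) 0 := mem_univ x
      have hlt := not_mem_osSets_succ hx0 hx
      obtain ⟨U₁, hU₁, hsmall⟩ := exists_nhds_small_osc hx0 hlt
      have key : ∀ V ∈ 𝓝 x, toscSuccWithin f univ (oscN f m) x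
          ≤ (⨆ y ∈ V ∩ univ, oscN f m y) + ENNReal.ofReal ε := by
        intro V hV
        refine (iInf₂_le (U₁ ∩ V) (inter_mem hU₁ hV)).trans (iSup₂_le fun y hy => ?_)
        have h1 : (‖f y - f x‖₊ : ℝ≥0∞) ≤ ENNReal.ofReal ε :=
          hsmall y ⟨hy.1.1, mem_univ y⟩
        have h2 : oscN f m y ≤ ⨆ z ∈ V ∩ univ, oscN f m z :=
          le_iSup₂ (f := fun z (_ : z ∈ V ∩ univ) => oscN f m z) y ⟨hy.1.2, mem_univ y⟩
        calc (‖f y - f x‖₊ : ℝ≥0∞) + oscN f m y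
            ≤ ENNReal.ofReal ε + (⨆ z ∈ V ∩ univ, oscN f m z) := add_le_add h1 h2
          _ = (⨆ z ∈ V ∩ univ, oscN f m z) + ENNReal.ofReal ε := add_comm _ _
      have h3 : toscSuccWithin f univ (oscN f m) x
          ≤ ⨅ V ∈ 𝓝 x, ((⨆ y ∈ V ∩ univ, oscN f m y) + ENNReal.ofReal ε) := le_iInf₂ key
      have h4 := biInf_nhds_add_const_le x (fun V => ⨆ y ∈ V ∩ univ, oscN f m y)
        (ENNReal.ofReal ε) (fun {U V} hUV => biSup_mono fun z hz => ⟨hUV hz.1, hz.2⟩)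
      have h5 : (⨅ V ∈ 𝓝 x, ⨆ y ∈ V ∩ univ, oscN f m y) = uscEnvWithin univ (oscN f m) x := rfl
      refine (h3.trans (h4.trans ?_))
      rw [h5]
      have := uscEnv_oscN_le f m x
      simpa using add_le_add_left this (ENNReal.ofReal ε)
  | succ i ih =>
      intro m hm x hx
      by_cases hx1 : x ∈ osSets f (fun _ => ε) (i + 1)
      · -- main case
        obtain ⟨m', rfl⟩ : ∃ m', m = m' + 1 := ⟨m - 1, by omega⟩
        have hm' : i ≤ m' := by omega
        -- increment lemma at points outside `M (i+1)`
        have hInc : ∀ y, y ∉ osSets f (fun _ => ε) (i + 1) →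
            oscN f (m' + 1) y ≤ oscN f m' y + ((i : ℝ≥0∞) + 1) * ENNReal.ofReal ε := by
          intro y hy
          have hopen : IsOpen (osSets f (fun _ => ε) (i + 1))ᶜ :=
            (isClosed_osSets f _ (i + 1)).isOpen_compl
          have key : ∀ V ∈ 𝓝 y, oscN f (m' + 1) y
              ≤ (⨆ z ∈ V ∩ univ, oscN f m' z) + ((i : ℝ≥0∞) + 1) * ENNReal.ofReal ε := by
            intro V hV
            have hVc : V ∩ (osSets f (fun _ => ε) (i + 1))ᶜ ∈ 𝓝 y :=
              inter_mem hV (hopen.mem_nhds hy)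
            have h1 : oscN f (m' + 1) y ≤
                ⨆ z ∈ (V ∩ (osSets f (fun _ => ε) (i + 1))ᶜ) ∩ univ,
                  toscSuccWithin f univ (oscN f m') z :=
              iInf₂_le _ hVc
            refine h1.trans (iSup₂_le fun z hz => ?_)
            have h2 := ih m' hm' z hz.1.2
            refine h2.trans (add_le_add_left ?_ _)
            exact le_iSup₂ (f := fun w (_ : w ∈ V ∩ univ) => oscN f m' w) z ⟨hz.1.1, mem_univ z⟩
          have h3 : oscN f (m' + 1) y ≤ ⨅ V ∈ 𝓝 y,
              ((⨆ z ∈ V ∩ univ, oscN f m' z) + ((i : ℝ≥0∞) + 1) * ENNReal.ofReal ε) :=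
            le_iInf₂ key
          refine h3.trans ((biInf_nhds_add_const_le y
            (fun V => ⨆ z ∈ V ∩ univ, oscN f m' z) (((i : ℝ≥0∞) + 1) * ENNReal.ofReal ε)
            (fun {U V} hUV => biSup_mono fun z hz => ⟨hUV hz.1, hz.2⟩)).trans ?_)
          exact add_le_add_left (uscEnv_oscN_le f m' y) _
        -- neighborhood control on `M (i+1)`
        have hlt := not_mem_osSets_succ hx1 hx
        obtain ⟨U₁, hU₁, hsmall⟩ := exists_nhds_small_osc hx1 hlt
        set ee := ENNReal.ofReal ε with hee
        set A : Set K → ℝ≥0∞ := fun V => ⨆ y ∈ V ∩ univ, oscN f (m' + 1) y with hA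
        set B : Set K → ℝ≥0∞ := fun V =>
          ⨆ y ∈ V ∩ univ, ((‖f y - f x‖₊ : ℝ≥0∞) + oscN f m' y) with hB
        have key : ∀ V ∈ 𝓝 x, toscSuccWithin f univ (oscN f (m' + 1)) x
            ≤ max (A V + ee) (B V + ((i : ℝ≥0∞) + 1) * ee) := by
          intro V hV
          have hmem : U₁ ∩ V ∈ 𝓝 x := inter_mem hU₁ hV
          refine (iInf₂_le (U₁ ∩ V) hmem).trans (iSup₂_le fun y hy => ?_)
          by_cases hyM : y ∈ osSets f (fun _ => ε) (i + 1)
          · refine le_max_of_le_left ?_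
            have h1 : (‖f y - f x‖₊ : ℝ≥0∞) ≤ ee := hsmall y ⟨hy.1.1, hyM⟩
            have h2 : oscN f (m' + 1) y ≤ A V :=
              le_iSup₂ (f := fun z (_ : z ∈ V ∩ univ) => oscN f (m' + 1) z) y
                ⟨hy.1.2, mem_univ y⟩
            calc (‖f y - f x‖₊ : ℝ≥0∞) + oscN f (m' + 1) y ≤ ee + A V := add_le_add h1 h2
              _ = A V + ee := add_comm _ _
          · refine le_max_of_le_right ?_
            have h1 := hInc y hyM
            have h2 : (‖f y - f x‖₊ : ℝ≥0∞) + oscN f m' y ≤ B V :=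
              le_iSup₂ (f := fun z (_ : z ∈ V ∩ univ) =>
                ((‖f z - f x‖₊ : ℝ≥0∞) + oscN f m' z)) y ⟨hy.1.2, mem_univ y⟩
            calc (‖f y - f x‖₊ : ℝ≥0∞) + oscN f (m' + 1) y
                ≤ (‖f y - f x‖₊ : ℝ≥0∞) + (oscN f m' y + ((i : ℝ≥0∞) + 1) * ee) :=
                  add_le_add_right h1 _
              _ = ((‖f y - f x‖₊ : ℝ≥0∞) + oscN f m' y) + ((i : ℝ≥0∞) + 1) * ee := by ring
              _ ≤ B V + ((i : ℝ≥0∞) + 1) * ee := add_le_add_left h2 _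
        have hAmono : ∀ {U V : Set K}, U ⊆ V → A U ≤ A V := by
          intro U V hUV
          exact biSup_mono (f := fun z => oscN f (m' + 1) z) fun z hz => ⟨hUV hz.1, hz.2⟩
        have hBmono : ∀ {U V : Set K}, U ⊆ V → B U ≤ B V := by
          intro U V hUV
          exact biSup_mono (f := fun z => ((‖f z - f x‖₊ : ℝ≥0∞) + oscN f m' z))
            fun z hz => ⟨hUV hz.1, hz.2⟩
        have h3 : toscSuccWithin f univ (oscN f (m' + 1)) x
            ≤ ⨅ V ∈ 𝓝 x, max (A V + ee) (B V + ((i : ℝ≥0∞) + 1) * ee) := le_iInf₂ key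
        have h4 := biInf_nhds_max_le x (fun V => A V + ee)
          (fun V => B V + ((i : ℝ≥0∞) + 1) * ee)
          (fun {U V} hUV => add_le_add_left (hAmono hUV) _)
          (fun {U V} hUV => add_le_add_left (hBmono hUV) _)
        have h5 : (⨅ V ∈ 𝓝 x, (A V + ee)) ≤ oscN f (m' + 1) x + ee := by
          refine (biInf_nhds_add_const_le x A ee hAmono).trans (add_le_add_left ?_ _)
          exact uscEnv_oscN_le f (m' + 1) x
        have h6 : (⨅ V ∈ 𝓝 x, (B V + ((i : ℝ≥0∞) + 1) * ee))
            ≤ oscN f (m' + 1) x + ((i : ℝ≥0∞) + 1) * ee := by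
          refine (biInf_nhds_add_const_le x B _ hBmono).trans (add_le_add_left ?_ _)
          exact toscSucc_le_oscN_succ f m' x
        refine h3.trans (h4.trans ((max_le_max h5 h6).trans ?_))
        have he1 : ee ≤ (((i : ℕ) + 1 : ℝ≥0∞) + 1) * ee := by
          nth_rewrite 1 [← one_mul ee]
          exact mul_le_mul_left (by
            refine le_add_of_le_of_nonneg ?_ (by positivity)
            exact le_add_self) ee
        have he2 : ((i : ℝ≥0∞) + 1) * ee ≤ (((i : ℕ) + 1 : ℝ≥0∞) + 1) * ee := by
          refine mul_le_mul_left ?_ ee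
          push_cast
          exact add_le_add_left (le_add_of_le_of_nonneg le_rfl zero_le_one) 1
        rw [max_le_iff]
        constructor
        · refine add_le_add_right ?_ _
          push_cast at he1 ⊢
          exact he1
        · refine add_le_add_right ?_ _
          push_cast at he2 ⊢
          exact he2
      · -- smaller stratum: apply IH directly
        have h := ih m (by omega) x hx1
        refine h.trans (add_le_add_right ?_ _)
        refine mul_le_mul_left ?_ _
        push_cast
        exact add_le_add_left (le_add_of_le_of_nonneg le_rfl zero_le_one) 1

end Stmt14Aux

end MainW
section Stability

universe u

open Filter Set Topology ENNReal

variable {K : Type u} [MetricSpace K]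

namespace Stmt14Aux

lemma osSets_empty_of_index {f : K → ℂ} {n : ℕ} (hn : baireIndexTotal f = (n : ℕ∞)) :
    ∀ ε : ℝ, 0 < ε → osSets f (fun _ => ε) (n + 1) = ∅ := by
  intro ε hε
  by_contra h
  have hne : (osSets f (fun _ => ε) (n + 1)).Nonempty := nonempty_iff_ne_empty.2 h
  have h1 : ((n + 1 : ℕ) : ℕ∞) ≤ baireIndexE f ε :=
    le_iSup₂ (f := fun m (_ : (osSets f (fun _ => ε) m).Nonempty) => (m : ℕ∞)) (n + 1) hne
  have h2 : baireIndexE f ε ≤ baireIndexTotal f :=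
    le_iSup₂ (f := fun (e : ℝ) (_ : 0 < e) => baireIndexE f e) ε hε
  rw [hn] at h2
  have h3 := h1.trans h2
  have h4 : (n + 1 : ℕ) ≤ n := by exact_mod_cast h3
  omega

lemma oscN_succ_le_self (f : K → ℂ) {n : ℕ}
    (hM : ∀ ε : ℝ, 0 < ε → osSets f (fun _ => ε) (n + 1) = ∅) (x : K) :
    oscN f (n + 1) x ≤ oscN f n x := by
  refine ENNReal.le_of_forall_pos_le_add fun δ hδ _ => ?_
  set ε : ℝ := (δ : ℝ) / (n + 2) with hε
  have hεpos : 0 < ε := by positivity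
  have hW' : ∀ x', toscSuccWithin f univ (oscN f n) x'
      ≤ oscN f n x' + ((n : ℝ≥0∞) + 1) * ENNReal.ofReal ε := by
    intro x'
    refine mainW f hεpos n n le_rfl x' ?_
    rw [hM ε hεpos]
    exact notMem_empty x'
  have h1 : oscN f (n + 1) x ≤
      uscEnvWithin univ (fun y => oscN f n y + ((n : ℝ≥0∞) + 1) * ENNReal.ofReal ε) x :=
    uscEnvWithin_mono_fun hW' x
  have h2 : uscEnvWithin univ (fun y => oscN f n y + ((n : ℝ≥0∞) + 1) * ENNReal.ofReal ε) x
      ≤ uscEnvWithin univ (oscN f n) x + ((n : ℝ≥0∞) + 1) * ENNReal.ofReal ε := by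
    have h4 := biInf_nhds_add_const_le x (fun V => ⨆ y ∈ V ∩ univ, oscN f n y)
      (((n : ℝ≥0∞) + 1) * ENNReal.ofReal ε)
      (fun {U V} hUV => biSup_mono fun z hz => ⟨hUV hz.1, hz.2⟩)
    refine le_trans ?_ h4
    refine le_iInf₂ fun U hU => ?_
    refine (iInf₂_le U hU).trans ?_
    refine iSup₂_le fun y hy => add_le_add_left ?_ _
    exact le_iSup₂ (f := fun z (_ : z ∈ U ∩ univ) => oscN f n z) y hy
  have h3 : ((n : ℝ≥0∞) + 1) * ENNReal.ofReal ε ≤ (δ : ℝ≥0∞) := by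
    have hc : ((n : ℝ≥0∞) + 1) = ENNReal.ofReal ((n : ℝ) + 1) := by
      rw [ENNReal.ofReal_add (by positivity) zero_le_one]
      simp
    rw [hc, ← ENNReal.ofReal_mul (by positivity), ← ENNReal.ofReal_coe_nnreal]
    refine ENNReal.ofReal_le_ofReal ?_
    rw [hε]
    rw [div_eq_mul_inv]
    have h5 : ((n : ℝ) + 1) * ((n : ℝ) + 2)⁻¹ ≤ 1 := by
      rw [mul_inv_le_iff₀ (by positivity), one_mul]
      linarith
    calc ((n : ℝ) + 1) * ((δ : ℝ) * ((n : ℝ) + 2)⁻¹)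
        = (δ : ℝ) * (((n : ℝ) + 1) * ((n : ℝ) + 2)⁻¹) := by ring
      _ ≤ (δ : ℝ) * 1 := by
          exact mul_le_mul_of_nonneg_left h5 δ.coe_nonneg
      _ = (δ : ℝ) := mul_one _
  calc oscN f (n + 1) x ≤ uscEnvWithin univ (oscN f n) x + ((n : ℝ≥0∞) + 1) * ENNReal.ofReal ε :=
        h1.trans h2
    _ ≤ oscN f n x + (δ : ℝ≥0∞) := add_le_add (uscEnv_oscN_le f n x) h3

lemma oscN_stable (f : K → ℂ) {n : ℕ}
    (hM : ∀ ε : ℝ, 0 < ε → osSets f (fun _ => ε) (n + 1) = ∅) :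
    oscN f n = oscN f (n + 1) :=
  funext fun x => le_antisymm (oscN_le_succ f n x) (oscN_succ_le_self f hM x)

/-- `u := oscN f n` is `f`-stable when the oscillations stabilize. -/
lemma stable_u (f : K → ℂ) {n : ℕ} (hst : oscN f n = oscN f (n + 1)) (x : K) :
    toscSuccWithin f univ (oscN f n) x ≤ oscN f n x := by
  refine (toscSucc_le_oscN_succ f n x).trans ?_
  rw [← hst]

/-- Domination transfer for the stability property. -/
lemma toscSucc_dom {g f : K → ℂ}
    (hdom : ∀ y x : K, (‖g y - g x‖₊ : ℝ≥0∞) ≤ (‖f y - f x‖₊ : ℝ≥0∞))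
    (u : K → ℝ≥0∞) (x : K) :
    toscSuccWithin g univ u x ≤ toscSuccWithin f univ u x :=
  iInf_mono fun U => iInf_mono fun _ => iSup_mono fun y => iSup_mono fun _ =>
    add_le_add_left (hdom y x) (u y)

/-- Pointwise bound `oscN f m ≤ m • oscN f 1`. -/
lemma oscN_le_mul (f : K → ℂ) : ∀ m x, oscN f m x ≤ (m : ℝ≥0∞) * oscN f 1 x := by
  intro m
  induction m with
  | zero => intro x; simp [oscN_zero]
  | succ m ih =>
      intro x
      have hpt : ∀ y, toscSuccWithin f univ (oscN f m) y ≤ oscN f 1 y + oscN f m y := by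
        intro y
        have h1 : toscSuccWithin f univ (oscN f m) y ≤
            ⨅ U ∈ 𝓝 y, ((⨆ z ∈ U ∩ univ, (‖f z - f y‖₊ : ℝ≥0∞))
              + (⨆ z ∈ U ∩ univ, oscN f m z)) := by
          refine le_iInf₂ fun U hU => (iInf₂_le U hU).trans (iSup₂_le fun z hz => ?_)
          exact add_le_add
            (le_iSup₂ (f := fun w (_ : w ∈ U ∩ univ) => ((‖f w - f y‖₊ : ℝ≥0∞))) z hz)
            (le_iSup₂ (f := fun w (_ : w ∈ U ∩ univ) => oscN f m w) z hz)
        have h2 := biInf_nhds_add_le y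
          (fun U => ⨆ z ∈ U ∩ univ, (‖f z - f y‖₊ : ℝ≥0∞))
          (fun U => ⨆ z ∈ U ∩ univ, oscN f m z)
          (fun {U V} hUV => biSup_mono fun z hz => ⟨hUV hz.1, hz.2⟩)
          (fun {U V} hUV => biSup_mono fun z hz => ⟨hUV hz.1, hz.2⟩)
        refine (h1.trans h2).trans (add_le_add ?_ (uscEnv_oscN_le f m y))
        -- first inf is `toscSuccWithin f univ (oscN f 0) y ≤ oscN f 1 y`
        have h3 : (⨅ U ∈ 𝓝 y, ⨆ z ∈ U ∩ univ, (‖f z - f y‖₊ : ℝ≥0∞))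
            = toscSuccWithin f univ (oscN f 0) y := by
          unfold toscSuccWithin
          congr 1
          ext U
          congr 1
          ext _
          congr 1
          ext z
          congr 1
          ext _
          show (‖f z - f y‖₊ : ℝ≥0∞) = (‖f z - f y‖₊ : ℝ≥0∞) + 0
          rw [add_zero]
        rw [h3]
        exact toscSucc_le_oscN_succ f 0 y
      have h4 : oscN f (m + 1) x ≤ uscEnvWithin univ (fun y => oscN f 1 y + oscN f m y) x :=
        uscEnvWithin_mono_fun hpt x
      have h5 := biInf_nhds_add_le x
        (fun U => ⨆ z ∈ U ∩ univ, oscN f 1 z)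
        (fun U => ⨆ z ∈ U ∩ univ, oscN f m z)
        (fun {U V} hUV => biSup_mono fun z hz => ⟨hUV hz.1, hz.2⟩)
        (fun {U V} hUV => biSup_mono fun z hz => ⟨hUV hz.1, hz.2⟩)
      have h6 : uscEnvWithin univ (fun y => oscN f 1 y + oscN f m y) x
          ≤ uscEnvWithin univ (oscN f 1) x + uscEnvWithin univ (oscN f m) x := by
        refine le_trans ?_ h5
        refine le_iInf₂ fun U hU => (iInf₂_le U hU).trans (iSup₂_le fun z hz => ?_)
        exact add_le_add
          (le_iSup₂ (f := fun w (_ : w ∈ U ∩ univ) => oscN f 1 w) z hz)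
          (le_iSup₂ (f := fun w (_ : w ∈ U ∩ univ) => oscN f m w) z hz)
      calc oscN f (m + 1) x
          ≤ uscEnvWithin univ (oscN f 1) x + uscEnvWithin univ (oscN f m) x := h4.trans h6
        _ ≤ oscN f 1 x + (m : ℝ≥0∞) * oscN f 1 x :=
            add_le_add (uscEnv_oscN_le f 1 x) ((uscEnv_oscN_le f m x).trans (ih x))
        _ = ((m : ℝ≥0∞) + 1) * oscN f 1 x := by ring
        _ = ((m + 1 : ℕ) : ℝ≥0∞) * oscN f 1 x := by push_cast; ring

end Stmt14Aux

end Stability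
section RealMachinery

universe u

open Filter Set Topology ENNReal NNReal

variable {K : Type u} [MetricSpace K]

namespace Stmt14Aux

/-- Real form of the stability hypothesis. -/
lemma stab_real {g : K → ℂ} {u : K → ℝ≥0∞} (hfin : ∀ k, u k ≠ ⊤)
    (hstab : ∀ x, toscSuccWithin g univ u x ≤ u x) :
    ∀ x, ∀ δ : ℝ, 0 < δ → ∃ U ∈ 𝓝 x, ∀ y ∈ U,
      ‖g y - g x‖ + (u y).toReal ≤ (u x).toReal + δ := by
  intro x δ hδ
  have h1 : toscSuccWithin g univ u x < u x + ENNReal.ofReal δ :=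
    (hstab x).trans_lt (ENNReal.lt_add_right (hfin x) (ENNReal.ofReal_pos.2 hδ).ne')
  obtain ⟨U, hU, hsup⟩ : ∃ U, ∃ _ : U ∈ 𝓝 x,
      (⨆ y ∈ U ∩ univ, ((‖g y - g x‖₊ : ℝ≥0∞) + u y)) < u x + ENNReal.ofReal δ := by
    simpa only [toscSuccWithin, iInf_lt_iff] using h1
  refine ⟨U, hU, fun y hy => ?_⟩
  have h2 : (‖g y - g x‖₊ : ℝ≥0∞) + u y < u x + ENNReal.ofReal δ :=
    (le_iSup₂ (f := fun z (_ : z ∈ U ∩ univ) => ((‖g z - g x‖₊ : ℝ≥0∞) + u z)) y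
      ⟨hy, mem_univ y⟩).trans_lt hsup
  have hfin2 : u x + ENNReal.ofReal δ ≠ ⊤ := ENNReal.add_ne_top.2 ⟨hfin x, ENNReal.ofReal_ne_top⟩
  have h3 := ENNReal.toReal_mono hfin2 h2.le
  rw [ENNReal.toReal_add ENNReal.coe_ne_top (hfin y),
      ENNReal.toReal_add (hfin x) ENNReal.ofReal_ne_top,
      ENNReal.coe_toReal, coe_nnnorm, ENNReal.toReal_ofReal hδ.le] at h3
  exact h3

/-- Upper semicontinuity of `u ± Re g` from stability. -/
lemma usc_of_stab {g : K → ℂ} {u : K → ℝ≥0∞}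
    (hsr : ∀ x, ∀ δ : ℝ, 0 < δ → ∃ U ∈ 𝓝 x, ∀ y ∈ U,
      ‖g y - g x‖ + (u y).toReal ≤ (u x).toReal + δ)
    (e : ℝ) (he : |e| = 1) :
    UpperSemicontinuous fun x => (u x).toReal + e * (g x).re := by
  intro x t ht
  have ht' : (u x).toReal + e * (g x).re < t := ht
  set δ : ℝ := t - ((u x).toReal + e * (g x).re) with hδdef
  have hδ : 0 < δ := by simp only [hδdef]; linarith
  obtain ⟨U, hU, hUp⟩ := hsr x (δ / 2) (by linarith)
  refine eventually_of_mem hU fun y hy => ?_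
  have h1 := hUp y hy
  have h2 : |(g y).re - (g x).re| ≤ ‖g y - g x‖ := by
    have := Complex.abs_re_le_norm (g y - g x)
    rw [Complex.sub_re] at this
    simpa using this
  have h3 : e * (g y).re - e * (g x).re ≤ |(g y).re - (g x).re| := by
    have habs : |e * ((g y).re - (g x).re)| = |(g y).re - (g x).re| := by
      rw [abs_mul, he, one_mul]
    have := le_abs_self (e * ((g y).re - (g x).re))
    rw [habs] at this
    linarith [this]
  have h4 : (0:ℝ) ≤ ‖g y - g x‖ := norm_nonneg _
  simp only [hδdef] at *
  linarith

/-- Moreau–Yosida: monotone continuous approximation of a bounded nonneg lsc function. -/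
lemma lsc_monotone_approx [Nonempty K] {h : K → ℝ} (hlsc : LowerSemicontinuous h)
    (h0 : ∀ x, 0 ≤ h x) {B : ℝ} (hB : ∀ x, h x ≤ B) :
    ∃ a : ℕ → K → ℝ, (∀ m, Continuous (a m)) ∧ (∀ m x, a m x ≤ a (m + 1) x) ∧
      (∀ m x, 0 ≤ a m x) ∧ (∀ m x, a m x ≤ h x) ∧
      ∀ x, Filter.Tendsto (fun m => a m x) Filter.atTop (𝓝 (h x)) := by
  set a : ℕ → K → ℝ := fun m x => ⨅ y, (h y + m * dist x y) with ha
  have hbdd : ∀ (m : ℕ) (x : K), BddBelow (Set.range fun y => h y + m * dist x y) := by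
    intro m x
    refine ⟨0, ?_⟩
    rintro r ⟨y, rfl⟩
    have h1 := h0 y
    have h2 : (0:ℝ) ≤ dist x y := dist_nonneg
    positivity
  have hle : ∀ m x, a m x ≤ h x := by
    intro m x
    have := ciInf_le (hbdd m x) x
    simpa using this
  have h0' : ∀ m x, 0 ≤ a m x := by
    intro m x
    refine le_ciInf fun y => ?_
    have h1 := h0 y
    have h2 : (0:ℝ) ≤ dist x y := dist_nonneg
    positivity
  have hmono : ∀ m x, a m x ≤ a (m + 1) x := by
    intro m x
    refine le_ciInf fun y => ?_
    refine (ciInf_le (hbdd m x) y).trans ?_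
    have h2 : (0:ℝ) ≤ dist x y := dist_nonneg
    have : (m : ℝ) * dist x y ≤ ((m + 1 : ℕ) : ℝ) * dist x y := by push_cast; nlinarith
    linarith
  have hlip : ∀ (m : ℕ) (x x' : K), a m x ≤ a m x' + m * dist x x' := by
    intro m x x'
    have key : ∀ y, a m x - m * dist x x' ≤ h y + m * dist x' y := by
      intro y
      have h1 : a m x ≤ h y + m * dist x y := ciInf_le (hbdd m x) y
      have h2 : dist x y ≤ dist x x' + dist x' y := dist_triangle _ _ _
      have h3 : (0:ℝ) ≤ (m : ℝ) := Nat.cast_nonneg m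
      nlinarith
    have := le_ciInf key
    linarith
  have hcont : ∀ m, Continuous (a m) := by
    intro m
    have hlw : LipschitzWith (m : ℝ≥0) (a m) := by
      refine LipschitzWith.of_dist_le_mul fun x x' => ?_
      rw [Real.dist_eq, abs_sub_le_iff]
      push_cast
      constructor
      · have := hlip m x x'; linarith
      · have h1 := hlip m x' x
        rw [dist_comm x' x] at h1
        linarith
    exact hlw.continuous
  refine ⟨a, hcont, hmono, h0', hle, fun x => ?_⟩
  rw [Metric.tendsto_atTop]
  intro ε hε
  obtain ⟨r, hr, hball⟩ : ∃ r > 0, ∀ y, dist y x < r → h x - ε / 2 < h y := by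
    have hev := hlsc x (h x - ε / 2) (by linarith)
    rw [Metric.eventually_nhds_iff] at hev
    exact hev
  refine ⟨⌈B / r⌉₊, fun m hm => ?_⟩
  have hge : h x - ε / 2 ≤ a m x := by
    refine le_ciInf fun y => ?_
    by_cases hd : dist x y < r
    · have h1 := hball y (by rwa [dist_comm])
      have h2 : (0:ℝ) ≤ (m : ℝ) * dist x y := by positivity
      linarith
    · push_neg at hd
      have hmN : ((⌈B / r⌉₊ : ℕ) : ℝ) ≤ (m : ℝ) := by exact_mod_cast hm
      have hceil : B / r ≤ (⌈B / r⌉₊ : ℝ) := Nat.le_ceil _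
      have h2 : B ≤ ((⌈B / r⌉₊ : ℕ) : ℝ) * r := by
        rw [div_le_iff₀ hr] at hceil; exact hceil
      have h3 : ((⌈B / r⌉₊ : ℕ) : ℝ) * r ≤ (m : ℝ) * dist x y := by
        have h4 : (0:ℝ) ≤ ((⌈B / r⌉₊ : ℕ) : ℝ) := Nat.cast_nonneg _
        nlinarith
      have h5 := h0 y
      have h6 := hB x
      linarith
  have hxy := hle m x
  rw [Real.dist_eq, abs_sub_lt_iff]
  constructor <;> linarith

/-- Strict insertion of a continuous function between usc and lsc with a gap. -/
lemma insertion {low up : K → ℝ} (hlow : UpperSemicontinuous low)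
    (hup : LowerSemicontinuous up) {δ : ℝ} (hδ : 0 < δ)
    (hgap : ∀ x, low x + 2 * δ ≤ up x) :
    ∃ φ : K → ℝ, Continuous φ ∧ ∀ x, low x ≤ φ x ∧ φ x ≤ up x := by
  have H : ∀ x : K, ∃ c : ℝ, ∀ᶠ y in 𝓝 x, c ∈ Set.Icc (low y) (up y) := by
    intro x
    refine ⟨low x + δ, ?_⟩
    have h1 : ∀ᶠ y in 𝓝 x, low y < low x + δ := hlow x (low x + δ) (by linarith)
    have h2 : ∀ᶠ y in 𝓝 x, up x - δ < up y := hup x (up x - δ) (by linarith [hgap x])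
    filter_upwards [h1, h2] with y hy1 hy2
    have h3 := hgap x
    exact ⟨hy1.le, by linarith⟩
  obtain ⟨g, hg⟩ := exists_continuous_forall_mem_convex_of_local_const
    (t := fun y => Set.Icc (low y) (up y)) (fun y => convex_Icc _ _) H
  exact ⟨g, g.continuous, fun x => ⟨(hg x).1, (hg x).2⟩⟩

/-- Decomposition of a real-valued stable function as an absolutely convergent
series of continuous functions. -/
lemma decomp (g : K → ℂ) (him : ∀ k, (g k).im = 0) (u : K → ℝ≥0∞)
    (hfin : ∀ k, u k ≠ ⊤) (hstab : ∀ x, toscSuccWithin g univ u x ≤ u x)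
    (lam : ℝ) (hlam : ∀ k, ‖g k‖ + (u k).toReal ≤ lam) :
    ∃ φ : ℕ → K → ℂ, IsDRep g φ ∧
      ∀ k, (∑' j, (‖φ j k‖₊ : ℝ≥0∞)) ≤ ENNReal.ofReal (lam - (u k).toReal) := by
  rcases isEmpty_or_nonempty K with hK | hK
  · exact ⟨fun _ _ => 0, ⟨fun _ => continuous_const, fun k => hK.elim k⟩, fun k => hK.elim k⟩
  set gr : K → ℝ := fun k => (g k).re with hgr
  set ur : K → ℝ := fun k => (u k).toReal with hur
  have hre : ∀ k, g k = ((gr k : ℝ) : ℂ) := fun k => by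
    apply Complex.ext
    · simp [hgr]
    · simp [him k]
  have hnorm : ∀ k, ‖g k‖ = |gr k| := fun k => by
    rw [hre k, Complex.norm_real, Real.norm_eq_abs]
  have hsr := stab_real hfin hstab
  have hur0 : ∀ k, 0 ≤ ur k := fun k => ENNReal.toReal_nonneg
  have hbound : ∀ k, |gr k| + ur k ≤ lam := fun k => by
    have := hlam k; rw [hnorm k] at this; exact this
  set h₁ : K → ℝ := fun x => (lam - ur x + gr x) / 2 with hh₁
  set h₂ : K → ℝ := fun x => (lam - ur x - gr x) / 2 with hh₂
  have husc1 := usc_of_stab hsr 1 (by norm_num)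
  have husc2 := usc_of_stab hsr (-1) (by norm_num)
  have hlsc1 : LowerSemicontinuous h₁ := by
    intro x t ht
    have h1 : ur x + (-1) * gr x < lam - 2 * t := by
      simp only [hh₁] at ht; linarith
    have := husc2 x (lam - 2 * t) h1
    filter_upwards [this] with y hy
    simp only [hh₁]
    linarith
  have hlsc2 : LowerSemicontinuous h₂ := by
    intro x t ht
    have h1 : ur x + 1 * gr x < lam - 2 * t := by
      simp only [hh₂] at ht; linarith
    have := husc1 x (lam - 2 * t) h1
    filter_upwards [this] with y hy
    simp only [hh₂]
    linarith
  have h₁0 : ∀ x, 0 ≤ h₁ x := fun x => by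
    have := hbound x
    have h2 := neg_abs_le (gr x)
    simp only [hh₁]
    linarith
  have h₂0 : ∀ x, 0 ≤ h₂ x := fun x => by
    have := hbound x
    have h2 := le_abs_self (gr x)
    simp only [hh₂]
    linarith
  have h₁B : ∀ x, h₁ x ≤ lam := fun x => by
    have := hbound x
    have h2 := le_abs_self (gr x)
    have h3 := abs_nonneg (gr x)
    have h4 := hur0 x
    simp only [hh₁]
    linarith
  have h₂B : ∀ x, h₂ x ≤ lam := fun x => by
    have := hbound x
    have h2 := neg_abs_le (gr x)
    have h3 := abs_nonneg (gr x)
    have h4 := hur0 x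
    simp only [hh₂]
    linarith
  obtain ⟨a, hacont, hamono, ha0, hale, hatend⟩ := lsc_monotone_approx hlsc1 h₁0 h₁B
  obtain ⟨b, hbcont, hbmono, hb0, hble, hbtend⟩ := lsc_monotone_approx hlsc2 h₂0 h₂B
  set A : ℕ → K → ℝ := fun m => match m with
    | 0 => fun _ => 0
    | (m + 1) => a m with hA
  set Bb : ℕ → K → ℝ := fun m => match m with
    | 0 => fun _ => 0
    | (m + 1) => b m with hBb
  have hAcont : ∀ m, Continuous (A m) := by
    intro m; cases m with
    | zero => exact continuous_const
    | succ m => exact hacont m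
  have hBcont : ∀ m, Continuous (Bb m) := by
    intro m; cases m with
    | zero => exact continuous_const
    | succ m => exact hbcont m
  have hAmono : ∀ m k, A m k ≤ A (m + 1) k := by
    intro m k; cases m with
    | zero => exact ha0 0 k
    | succ m => exact hamono m k
  have hBmono : ∀ m k, Bb m k ≤ Bb (m + 1) k := by
    intro m k; cases m with
    | zero => exact hb0 0 k
    | succ m => exact hbmono m k
  have hAle : ∀ m k, A m k ≤ h₁ k := by
    intro m k; cases m with
    | zero => exact h₁0 k
    | succ m => exact hale m k
  have hBle : ∀ m k, Bb m k ≤ h₂ k := by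
    intro m k; cases m with
    | zero => exact h₂0 k
    | succ m => exact hble m k
  have hAtend : ∀ k, Tendsto (fun m => A m k) atTop (𝓝 (h₁ k)) := by
    intro k
    rw [← Filter.tendsto_add_atTop_iff_nat 1]
    exact hatend k
  have hBtend : ∀ k, Tendsto (fun m => Bb m k) atTop (𝓝 (h₂ k)) := by
    intro k
    rw [← Filter.tendsto_add_atTop_iff_nat 1]
    exact hbtend k
  set ψ : ℕ → K → ℝ := fun j k => (A (j + 1) k - A j k) - (Bb (j + 1) k - Bb j k) with hψ
  set φ : ℕ → K → ℂ := fun j k => ((ψ j k : ℝ) : ℂ) with hφ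
  have hφcont : ∀ j, Continuous (φ j) :=
    fun j => Complex.continuous_ofReal.comp
      (((hAcont (j + 1)).sub (hAcont j)).sub ((hBcont (j + 1)).sub (hBcont j)))
  -- pointwise facts
  have hdA : ∀ j k, 0 ≤ A (j + 1) k - A j k := fun j k => sub_nonneg.2 (hAmono j k)
  have hdB : ∀ j k, 0 ≤ Bb (j + 1) k - Bb j k := fun j k => sub_nonneg.2 (hBmono j k)
  have hsumA : ∀ N k, ∑ j ∈ Finset.range N, (A (j + 1) k - A j k) = A N k := by
    intro N k
    rw [Finset.sum_range_sub (f := fun m => A m k)]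
    simp [hA]
  have hsumB : ∀ N k, ∑ j ∈ Finset.range N, (Bb (j + 1) k - Bb j k) = Bb N k := by
    intro N k
    rw [Finset.sum_range_sub (f := fun m => Bb m k)]
    simp [hBb]
  have habs : ∀ j k, ‖ψ j k‖ ≤ (A (j + 1) k - A j k) + (Bb (j + 1) k - Bb j k) := by
    intro j k
    rw [Real.norm_eq_abs, hψ]
    calc |(A (j + 1) k - A j k) - (Bb (j + 1) k - Bb j k)|
        ≤ |A (j + 1) k - A j k| + |Bb (j + 1) k - Bb j k| := by
          rw [sub_eq_add_neg]
          exact (abs_add_le _ _).trans (by rw [abs_neg])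
      _ = (A (j + 1) k - A j k) + (Bb (j + 1) k - Bb j k) := by
          rw [abs_of_nonneg (hdA j k), abs_of_nonneg (hdB j k)]
  have hsum_dom : ∀ k, Summable (fun j => (A (j + 1) k - A j k) + (Bb (j + 1) k - Bb j k)) := by
    intro k
    refine summable_of_sum_range_le (c := h₁ k + h₂ k)
      (fun j => add_nonneg (hdA j k) (hdB j k)) fun N => ?_
    rw [Finset.sum_add_distrib, hsumA, hsumB]
    exact add_le_add (hAle N k) (hBle N k)
  have hψsummable : ∀ k, Summable (fun j => ψ j k) :=
    fun k => Summable.of_norm_bounded (hsum_dom k) (fun j => habs j k)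
  have hψnormsummable : ∀ k, Summable (fun j => ‖ψ j k‖) := fun k =>
    Summable.of_nonneg_of_le (fun j => norm_nonneg _) (fun j => habs j k) (hsum_dom k)
  have hpartial : ∀ N k, ∑ j ∈ Finset.range N, ψ j k = A N k - Bb N k := by
    intro N k
    rw [hψ]
    rw [Finset.sum_sub_distrib, hsumA, hsumB]
  have hψsum : ∀ k, HasSum (fun j => ψ j k) (gr k) := by
    intro k
    have h1 := (hψsummable k).hasSum
    have h2 := h1.tendsto_sum_nat
    have h3 : Tendsto (fun N => ∑ j ∈ Finset.range N, ψ j k) atTop (𝓝 (h₁ k - h₂ k)) := by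
      simp only [hpartial]
      exact (hAtend k).sub (hBtend k)
    have h4 : ∑' j, ψ j k = h₁ k - h₂ k := tendsto_nhds_unique h2 h3
    have h5 : h₁ k - h₂ k = gr k := by simp only [hh₁, hh₂]; ring
    rw [h4, h5] at h1
    exact h1
  have hφsum : ∀ k, HasSum (fun j => φ j k) (g k) := by
    intro k
    have h1 := Complex.ofRealCLM.hasSum (hψsum k)
    rw [hre k]
    exact h1
  refine ⟨φ, ⟨hφcont, hφsum⟩, fun k => ?_⟩
  have heq : ∀ j, (‖φ j k‖₊ : ℝ≥0∞) = ENNReal.ofReal ‖ψ j k‖ := by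
    intro j
    rw [← enorm_eq_nnnorm, ← ofReal_norm]
    congr 1
    rw [hφ]
    exact Complex.norm_real _
  calc (∑' j, (‖φ j k‖₊ : ℝ≥0∞)) = ∑' j, ENNReal.ofReal ‖ψ j k‖ := by
        exact tsum_congr heq
    _ = ENNReal.ofReal (∑' j, ‖ψ j k‖) :=
        (ENNReal.ofReal_tsum_of_nonneg (fun j => norm_nonneg _) (hψnormsummable k)).symm
    _ ≤ ENNReal.ofReal (lam - ur k) := by
        refine ENNReal.ofReal_le_ofReal ?_
        refine Real.tsum_le_of_sum_range_le (fun j => norm_nonneg _) fun N => ?_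
        have h1 : ∑ j ∈ Finset.range N, ‖ψ j k‖
            ≤ ∑ j ∈ Finset.range N, ((A (j + 1) k - A j k) + (Bb (j + 1) k - Bb j k)) :=
          Finset.sum_le_sum fun j _ => habs j k
        rw [Finset.sum_add_distrib, hsumA, hsumB] at h1
        have h2 : h₁ k + h₂ k = lam - ur k := by simp only [hh₁, hh₂]; ring
        have h3 := add_le_add (hAle N k) (hBle N k)
        linarith

end Stmt14Aux

end RealMachinery
section Glue

universe u

open Filter Set Topology ENNReal NNReal

variable {K : Type u} [MetricSpace K]

namespace Stmt14Aux

lemma stab_sub_continuous {f : K → ℂ} {u : K → ℝ≥0∞} (hfin : ∀ k, u k ≠ ⊤)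
    (hstab : ∀ x, toscSuccWithin f univ u x ≤ u x) {φ : K → ℂ} (hφ : Continuous φ) :
    ∀ x, toscSuccWithin (fun k => f k - φ k) univ u x ≤ u x := by
  intro x
  refine ENNReal.le_of_forall_pos_le_add fun δ hδ _ => ?_
  have hδ2 : (0:ℝ) < (δ : ℝ) / 2 := by positivity
  have h1 : toscSuccWithin f univ u x < u x + ENNReal.ofReal ((δ : ℝ) / 2) :=
    (hstab x).trans_lt (ENNReal.lt_add_right (hfin x) (ENNReal.ofReal_pos.2 hδ2).ne')
  obtain ⟨U₁, hU₁, hsup⟩ : ∃ U, ∃ _ : U ∈ 𝓝 x,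
      (⨆ y ∈ U ∩ univ, ((‖f y - f x‖₊ : ℝ≥0∞) + u y)) < u x + ENNReal.ofReal ((δ : ℝ) / 2) := by
    simpa only [toscSuccWithin, iInf_lt_iff] using h1
  have h2 : ∀ᶠ y in 𝓝 x, dist (φ y) (φ x) < (δ : ℝ) / 2 :=
    Metric.tendsto_nhds.1 (hφ.tendsto x) _ hδ2
  have hU₂ : {y | dist (φ y) (φ x) < (δ : ℝ) / 2} ∈ 𝓝 x := h2
  refine (iInf₂_le (U₁ ∩ {y | dist (φ y) (φ x) < (δ : ℝ) / 2})
    (inter_mem hU₁ hU₂)).trans (iSup₂_le fun y hy => ?_)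
  have h3 : (‖f y - f x‖₊ : ℝ≥0∞) + u y < u x + ENNReal.ofReal ((δ : ℝ) / 2) :=
    (le_iSup₂ (f := fun z (_ : z ∈ U₁ ∩ univ) => ((‖f z - f x‖₊ : ℝ≥0∞) + u z)) y
      ⟨hy.1.1, mem_univ y⟩).trans_lt hsup
  have h4 : (‖(f y - φ y) - (f x - φ x)‖₊ : ℝ≥0∞)
      ≤ (‖f y - f x‖₊ : ℝ≥0∞) + (‖φ y - φ x‖₊ : ℝ≥0∞) := by
    have he : (f y - φ y) - (f x - φ x) = (f y - f x) - (φ y - φ x) := by ring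
    rw [he]
    exact_mod_cast nnnorm_sub_le _ _
  have h5 : (‖φ y - φ x‖₊ : ℝ≥0∞) ≤ ENNReal.ofReal ((δ : ℝ) / 2) := by
    rw [← enorm_eq_nnnorm, ← ofReal_norm]
    refine ENNReal.ofReal_le_ofReal ?_
    have h6 : dist (φ y) (φ x) < (δ : ℝ) / 2 := hy.1.2
    rw [dist_eq_norm] at h6
    exact h6.le
  calc (‖(fun k => f k - φ k) y - (fun k => f k - φ k) x‖₊ : ℝ≥0∞) + u y
      ≤ ((‖f y - f x‖₊ : ℝ≥0∞) + (‖φ y - φ x‖₊ : ℝ≥0∞)) + u y := add_le_add_left h4 _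
    _ = ((‖f y - f x‖₊ : ℝ≥0∞) + u y) + (‖φ y - φ x‖₊ : ℝ≥0∞) := by ring
    _ ≤ (u x + ENNReal.ofReal ((δ : ℝ) / 2)) + ENNReal.ofReal ((δ : ℝ) / 2) :=
        add_le_add h3.le h5
    _ = u x + (ENNReal.ofReal ((δ : ℝ) / 2) + ENNReal.ofReal ((δ : ℝ) / 2)) := by ring
    _ = u x + (δ : ℝ≥0∞) := by
        rw [← ENNReal.ofReal_add hδ2.le hδ2.le]
        rw [add_halves, ENNReal.ofReal_coe_nnreal]

lemma dom_re (f : K → ℂ) : ∀ y x : K,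
    (‖((f y).re : ℂ) - ((f x).re : ℂ)‖₊ : ℝ≥0∞) ≤ (‖f y - f x‖₊ : ℝ≥0∞) := by
  intro y x
  rw [← enorm_eq_nnnorm, ← enorm_eq_nnnorm, ← ofReal_norm, ← ofReal_norm]
  refine ENNReal.ofReal_le_ofReal ?_
  have h1 : ((f y).re : ℂ) - ((f x).re : ℂ) = (((f y).re - (f x).re : ℝ) : ℂ) := by push_cast; ring
  rw [h1, Complex.norm_real, Real.norm_eq_abs]
  have h2 := Complex.abs_re_le_norm (f y - f x)
  rwa [Complex.sub_re] at h2

lemma dom_im (f : K → ℂ) : ∀ y x : K,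
    (‖((f y).im : ℂ) - ((f x).im : ℂ)‖₊ : ℝ≥0∞) ≤ (‖f y - f x‖₊ : ℝ≥0∞) := by
  intro y x
  rw [← enorm_eq_nnnorm, ← enorm_eq_nnnorm, ← ofReal_norm, ← ofReal_norm]
  refine ENNReal.ofReal_le_ofReal ?_
  have h1 : ((f y).im : ℂ) - ((f x).im : ℂ) = (((f y).im - (f x).im : ℝ) : ℂ) := by push_cast; ring
  rw [h1, Complex.norm_real, Real.norm_eq_abs]
  have h2 := Complex.abs_im_le_norm (f y - f x)
  rwa [Complex.sub_im] at h2

end Stmt14Aux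

end Glue
/-- a bounded function of finite Baire index `n` belongs to `D(K)`,
`osc_n f = osc_{n+1} f`, and for real-valued `f` the stated norm estimates hold. -/
theorem stmt14 {K : Type u} [MetricSpace K] (f : K → ℂ)
    (hb : ∃ C : ℝ, ∀ k, ‖f k‖ ≤ C) (n : ℕ)
    (hn : baireIndexTotal f = (n : ℕ∞)) :
    MemD f ∧ oscN f n = oscN f (n + 1) ∧
    ((∀ k, (f k).im = 0) →
      DNorm f ≤ ((2 * n + 1 : ℕ) : ℝ≥0∞) * (⨆ k, (‖f k‖₊ : ℝ≥0∞)) ∧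
      qDNorm f ≤ (n : ℝ≥0∞) * (⨆ k, oscN f 1 k) ∧
      (n : ℝ≥0∞) * (⨆ k, oscN f 1 k) ≤ ((2 * n : ℕ) : ℝ≥0∞) * (⨆ k, (‖f k‖₊ : ℝ≥0∞))) := by
  classical
  obtain ⟨C, hC⟩ := hb
  have hC' : ∀ k, ‖f k‖ ≤ max C 0 := fun k => (hC k).trans (le_max_left _ _)
  have hM := Stmt14Aux.osSets_empty_of_index hn
  have hstable : oscN f n = oscN f (n + 1) := Stmt14Aux.oscN_stable f hM
  set S : ℝ≥0∞ := ⨆ k, (‖f k‖₊ : ℝ≥0∞) with hS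
  have hfS : ∀ k, (‖f k‖₊ : ℝ≥0∞) ≤ S := fun k => le_iSup (fun k => ((‖f k‖₊ : ℝ≥0∞))) k
  have hSle : S ≤ ENNReal.ofReal (max C 0) := by
    refine iSup_le fun k => ?_
    rw [← enorm_eq_nnnorm, ← ofReal_norm]
    exact ENNReal.ofReal_le_ofReal (hC' k)
  have hSfin : S ≠ ⊤ := ne_top_of_le_ne_top ENNReal.ofReal_ne_top hSle
  set u : K → ℝ≥0∞ := oscN f n with hu
  have hub : ∀ x, u x ≤ 2 * (n : ℝ≥0∞) * S := fun x => Stmt14Aux.oscN_le_bound f hfS n x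
  have h2nSfin : 2 * (n : ℝ≥0∞) * S ≠ ⊤ :=
    ENNReal.mul_ne_top (ENNReal.mul_ne_top (by simp) (ENNReal.natCast_ne_top n)) hSfin
  have hufin : ∀ x, u x ≠ ⊤ := fun x => ne_top_of_le_ne_top h2nSfin (hub x)
  have hstab : ∀ x, toscSuccWithin f univ u x ≤ u x := Stmt14Aux.stable_u f hstable
  -- pointwise real bound on `u`
  have hurb : ∀ k, (u k).toReal ≤ 2 * (n : ℝ) * max C 0 := by
    intro k
    have h1 : u k ≤ 2 * (n : ℝ≥0∞) * ENNReal.ofReal (max C 0) :=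
      (hub k).trans (mul_le_mul_right hSle _)
    have h2 : 2 * (n : ℝ≥0∞) * ENNReal.ofReal (max C 0) ≠ ⊤ :=
      ENNReal.mul_ne_top (ENNReal.mul_ne_top (by simp) (ENNReal.natCast_ne_top n))
        ENNReal.ofReal_ne_top
    have h3 := ENNReal.toReal_mono h2 h1
    rwa [ENNReal.toReal_mul, ENNReal.toReal_mul, ENNReal.toReal_ofNat,
      ENNReal.toReal_natCast, ENNReal.toReal_ofReal (le_max_right C 0)] at h3
  -- MemD
  have hMemD : MemD f := by
    set g1 : K → ℂ := fun k => ((f k).re : ℂ) with hg1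
    set g2 : K → ℂ := fun k => ((f k).im : ℂ) with hg2
    have hstab1 : ∀ x, toscSuccWithin g1 univ u x ≤ u x :=
      fun x => (Stmt14Aux.toscSucc_dom (Stmt14Aux.dom_re f) u x).trans (hstab x)
    have hstab2 : ∀ x, toscSuccWithin g2 univ u x ≤ u x :=
      fun x => (Stmt14Aux.toscSucc_dom (Stmt14Aux.dom_im f) u x).trans (hstab x)
    set lam : ℝ := max C 0 + 2 * (n : ℝ) * max C 0 with hlamdef
    have hlam1 : ∀ k, ‖g1 k‖ + (u k).toReal ≤ lam := by
      intro k
      have h1 : ‖g1 k‖ ≤ max C 0 := by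
        rw [hg1]
        rw [Complex.norm_real, Real.norm_eq_abs]
        exact (Complex.abs_re_le_norm (f k)).trans
          (hC' k)
      have h2 := hurb k
      simp only [hlamdef]
      linarith
    have hlam2 : ∀ k, ‖g2 k‖ + (u k).toReal ≤ lam := by
      intro k
      have h1 : ‖g2 k‖ ≤ max C 0 := by
        rw [hg2]
        rw [Complex.norm_real, Real.norm_eq_abs]
        exact (Complex.abs_im_le_norm (f k)).trans
          (hC' k)
      have h2 := hurb k
      simp only [hlamdef]
      linarith
    obtain ⟨φ1, hrep1, hb1⟩ := Stmt14Aux.decomp g1 (fun k => by simp [hg1]) u hufin hstab1 lam hlam1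
    obtain ⟨φ2, hrep2, hb2⟩ := Stmt14Aux.decomp g2 (fun k => by simp [hg2]) u hufin hstab2 lam hlam2
    set χ : ℕ → K → ℂ := fun j k => φ1 j k + Complex.I * φ2 j k with hχ
    refine ⟨χ, ⟨fun j => ((hrep1.1 j).add (continuous_const.mul (hrep2.1 j))), fun k => ?_⟩, ?_⟩
    · have h1 := (hrep1.2 k).add ((hrep2.2 k).mul_left Complex.I)
      have h2 : g1 k + Complex.I * g2 k = f k := by
        rw [hg1, hg2]
        rw [mul_comm]
        exact Complex.re_add_im (f k)
      rwa [h2] at h1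
    · have hbd : ∀ k, (∑' j, (‖χ j k‖₊ : ℝ≥0∞)) ≤ ENNReal.ofReal lam + ENNReal.ofReal lam := by
        intro k
        have hle : ∀ j, (‖χ j k‖₊ : ℝ≥0∞) ≤ (‖φ1 j k‖₊ : ℝ≥0∞) + (‖φ2 j k‖₊ : ℝ≥0∞) := by
          intro j
          have h1 : ‖χ j k‖₊ ≤ ‖φ1 j k‖₊ + ‖Complex.I * φ2 j k‖₊ := nnnorm_add_le _ _
          have h2 : ‖Complex.I * φ2 j k‖₊ = ‖φ2 j k‖₊ := by
            rw [nnnorm_mul, Complex.nnnorm_I, one_mul]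
          rw [h2] at h1
          exact_mod_cast h1
        calc (∑' j, (‖χ j k‖₊ : ℝ≥0∞))
            ≤ ∑' j, ((‖φ1 j k‖₊ : ℝ≥0∞) + (‖φ2 j k‖₊ : ℝ≥0∞)) := ENNReal.tsum_le_tsum hle
          _ = (∑' j, (‖φ1 j k‖₊ : ℝ≥0∞)) + ∑' j, (‖φ2 j k‖₊ : ℝ≥0∞) := ENNReal.tsum_add
          _ ≤ ENNReal.ofReal lam + ENNReal.ofReal lam := by
              refine add_le_add ((hb1 k).trans ?_) ((hb2 k).trans ?_) <;>
                exact ENNReal.ofReal_le_ofReal (by linarith [ENNReal.toReal_nonneg (a := u k)])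
      calc DBound χ ≤ ENNReal.ofReal lam + ENNReal.ofReal lam := iSup_le hbd
        _ < ⊤ := by finiteness
  refine ⟨hMemD, hstable, fun hreal => ?_⟩
  -- Real case
  set Sr : ℝ := S.toReal with hSr
  have hSr0 : 0 ≤ Sr := ENNReal.toReal_nonneg
  have hfkS : ∀ k, ‖f k‖ ≤ Sr := by
    intro k
    have h1 := ENNReal.toReal_mono hSfin (hfS k)
    rwa [ENNReal.coe_toReal, coe_nnnorm] at h1
  have hurb2 : ∀ k, (u k).toReal ≤ 2 * (n : ℝ) * Sr := by
    intro k
    have h1 := ENNReal.toReal_mono h2nSfin (hub k)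
    rwa [ENNReal.toReal_mul, ENNReal.toReal_mul, ENNReal.toReal_ofNat,
      ENNReal.toReal_natCast] at h1
  have hDN : DNorm f ≤ ((2 * n + 1 : ℕ) : ℝ≥0∞) * S := by
    set lam2 : ℝ := (2 * (n : ℝ) + 1) * Sr with hlam2def
    have hlam2 : ∀ k, ‖f k‖ + (u k).toReal ≤ lam2 := by
      intro k
      have h1 := hfkS k
      have h2 := hurb2 k
      have h3 : lam2 = 2 * (n : ℝ) * Sr + Sr := by rw [hlam2def]; ring
      linarith
    obtain ⟨φ, hrep, hbd⟩ := Stmt14Aux.decomp f hreal u hufin hstab lam2 hlam2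
    have h4 : DNorm f ≤ DBound φ := iInf₂_le φ hrep
    have h5 : DBound φ ≤ ENNReal.ofReal lam2 := by
      refine iSup_le fun k => (hbd k).trans ?_
      exact ENNReal.ofReal_le_ofReal (by linarith [ENNReal.toReal_nonneg (a := u k)])
    have h6 : ENNReal.ofReal lam2 = ((2 * n + 1 : ℕ) : ℝ≥0∞) * S := by
      rw [hlam2def, ENNReal.ofReal_mul (by positivity)]
      congr 1
      · rw [show (2 * (n : ℝ) + 1) = ((2 * n + 1 : ℕ) : ℝ) by push_cast; ring,
          ENNReal.ofReal_natCast]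
      · rw [hSr, ENNReal.ofReal_toReal hSfin]
    exact h4.trans (h5.trans_eq h6)
  refine ⟨hDN, ?_, ?_⟩
  · -- qD estimate
    set V : ℝ≥0∞ := ⨆ k, u k with hV
    have hVfin : V ≠ ⊤ := ne_top_of_le_ne_top h2nSfin (iSup_le hub)
    have hqD : qDNorm f ≤ V := by
      refine ENNReal.le_of_forall_pos_le_add fun δ hδ _ => ?_
      have hδr0 : (0:ℝ) < (δ : ℝ) := hδ
      set δr : ℝ := (δ : ℝ) with hδr
      set c : ℝ := V.toReal with hc
      have hc0 : 0 ≤ c := ENNReal.toReal_nonneg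
      have huc : ∀ k, (u k).toReal ≤ c := fun k => ENNReal.toReal_mono hVfin (le_iSup u k)
      have hsr := Stmt14Aux.stab_real hufin hstab
      have husc1 := Stmt14Aux.usc_of_stab hsr 1 (by norm_num)
      have husc2 := Stmt14Aux.usc_of_stab hsr (-1) (by norm_num)
      set low : K → ℝ := fun x => (f x).re + (u x).toReal - c - δr / 2 with hlowdef
      set up : K → ℝ := fun x => (f x).re - (u x).toReal + c + δr / 2 with hupdef
      have hlowusc : UpperSemicontinuous low := by
        intro x t ht
        have ht' : low x < t := ht
        have h1 : (u x).toReal + 1 * (f x).re < t + c + δr / 2 := by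
          simp only [hlowdef] at ht'; linarith
        filter_upwards [husc1 x _ h1] with y hy
        simp only [hlowdef]
        linarith
      have huplsc : LowerSemicontinuous up := by
        intro x t ht
        have ht' : t < up x := ht
        have h1 : (u x).toReal + (-1) * (f x).re < (c + δr / 2) - t := by
          simp only [hupdef] at ht'; linarith
        filter_upwards [husc2 x _ h1] with y hy
        simp only [hupdef]
        linarith
      have hgap : ∀ x, low x + 2 * (δr / 4) ≤ up x := by
        intro x
        have h1 := huc x
        have h2 : (0:ℝ) ≤ (u x).toReal := ENNReal.toReal_nonneg
        simp only [hlowdef, hupdef]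
        linarith
      obtain ⟨φr, hφrc, hφr⟩ := Stmt14Aux.insertion hlowusc huplsc (by positivity) hgap
      set φ₀ : K → ℂ := fun k => ((φr k : ℝ) : ℂ) with hφ₀def
      have hφ₀c : Continuous φ₀ := Complex.continuous_ofReal.comp hφrc
      have hrebd : ∀ k, |(f k).re| ≤ max C 0 := by
        intro k
        exact (Complex.abs_re_le_norm (f k)).trans
          (hC' k)
      have hφ₀b : ∃ Cb : ℝ, ∀ k, ‖φ₀ k‖ ≤ Cb := by
        refine ⟨max C 0 + c + δr / 2, fun k => ?_⟩
        have h1 := (hφr k).1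
        have h2 := (hφr k).2
        have h3 := hrebd k
        have h4 : (0:ℝ) ≤ (u k).toReal := ENNReal.toReal_nonneg
        have h5 := huc k
        have habs : |(f k).re| ≤ max C 0 := h3
        have h6 : ‖φ₀ k‖ = |φr k| := by
          rw [hφ₀def, Complex.norm_real, Real.norm_eq_abs]
        rw [h6, abs_le]
        constructor
        · simp only [hlowdef] at h1
          have := neg_abs_le (f k).re
          linarith
        · simp only [hupdef] at h2
          have := le_abs_self (f k).re
          linarith
      set g : K → ℂ := fun k => f k - φ₀ k with hgdef
      have hgim : ∀ k, (g k).im = 0 := by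
        intro k
        simp [hgdef, Complex.sub_im, hreal k, hφ₀def]
      have hgstab : ∀ x, toscSuccWithin g univ u x ≤ u x :=
        Stmt14Aux.stab_sub_continuous hufin hstab hφ₀c
      have hglam : ∀ k, ‖g k‖ + (u k).toReal ≤ c + δr / 2 := by
        intro k
        have h1 := (hφr k).1
        have h2 := (hφr k).2
        have h3 : g k = (((f k).re - φr k : ℝ) : ℂ) := by
          have h4 : f k = (((f k).re : ℝ) : ℂ) := by
            apply Complex.ext
            · simp
            · simp [hreal k]
          calc g k = f k - ((φr k : ℝ) : ℂ) := rfl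
            _ = (((f k).re : ℝ) : ℂ) - ((φr k : ℝ) : ℂ) := by rw [← h4]
            _ = (((f k).re - φr k : ℝ) : ℂ) := by rw [Complex.ofReal_sub]
        have h5 : ‖g k‖ = |(f k).re - φr k| := by
          rw [h3, Complex.norm_real, Real.norm_eq_abs]
        have h6 : |(f k).re - φr k| ≤ c + δr / 2 - (u k).toReal := by
          rw [abs_sub_le_iff]
          constructor
          · simp only [hlowdef] at h1; linarith
          · simp only [hupdef] at h2; linarith
        rw [h5]
        linarith
      obtain ⟨ψ, hψrep, hψbd⟩ := Stmt14Aux.decomp g hgim u hufin hgstab (c + δr / 2) hglam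
      have hq1 : qDNorm f ≤ DNorm (f - φ₀) := iInf₂_le φ₀ ⟨hφ₀c, hφ₀b⟩
      have hq2 : DNorm (f - φ₀) ≤ DBound ψ := iInf₂_le ψ hψrep
      have hq3 : DBound ψ ≤ ENNReal.ofReal (c + δr / 2) := by
        refine iSup_le fun k => (hψbd k).trans ?_
        exact ENNReal.ofReal_le_ofReal (by linarith [ENNReal.toReal_nonneg (a := u k)])
      have hq4 : ENNReal.ofReal (c + δr / 2) ≤ V + (δ : ℝ≥0∞) := by
        rw [ENNReal.ofReal_add hc0 (by positivity)]
        rw [hc, ENNReal.ofReal_toReal hVfin]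
        refine add_le_add_right ?_ V
        calc ENNReal.ofReal (δr / 2) ≤ ENNReal.ofReal δr :=
              ENNReal.ofReal_le_ofReal (by linarith)
          _ = (δ : ℝ≥0∞) := by rw [hδr, ENNReal.ofReal_coe_nnreal]
      exact hq1.trans (hq2.trans (hq3.trans hq4))
    have hVle : V ≤ (n : ℝ≥0∞) * (⨆ k, oscN f 1 k) := by
      refine iSup_le fun k => ?_
      exact (Stmt14Aux.oscN_le_mul f n k).trans
        (mul_le_mul_right (le_iSup (fun k => oscN f 1 k) k) _)
    exact hqD.trans hVle
  · -- last inequality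
    have hosc1 : ∀ k, oscN f 1 k ≤ 2 * S := by
      intro k
      have h1 := Stmt14Aux.oscN_le_bound f hfS 1 k
      simpa using h1
    calc (n : ℝ≥0∞) * (⨆ k, oscN f 1 k) ≤ (n : ℝ≥0∞) * (2 * S) :=
          mul_le_mul_right (iSup_le hosc1) _
      _ = ((2 * n : ℕ) : ℝ≥0∞) * S := by push_cast; ring
end

section
/- Let K be a metric space and f : K → ℝ a real-valued function in SD(K). Then ‖f‖_D = ‖f‖_{B_{1/4}}. -/
open Filter Set Topology ENNReal

section AuxProof

open scoped NNReal

variable {K : Type u} [MetricSpace K]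

private lemma dnorm_le_dbound {f : K → ℂ} {φ : ℕ → K → ℂ} (h : IsDRep f φ) :
    DNorm f ≤ DBound φ :=
  iInf₂_le φ h

private lemma exists_rep_of_lt {f : K → ℂ} {c : ℝ≥0∞} (h : DNorm f < c) :
    ∃ φ, IsDRep f φ ∧ DBound φ < c := by
  rw [DNorm] at h
  obtain ⟨φ, hφ⟩ := iInf_lt_iff.1 h
  obtain ⟨h1, h2⟩ := iInf_lt_iff.1 hφ
  exact ⟨φ, h1, h2⟩

private lemma dbound_le {φ : ℕ → K → ℂ} {M : ℝ≥0∞}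
    (h : ∀ k, ∑' j, (‖φ j k‖₊ : ℝ≥0∞) ≤ M) : DBound φ ≤ M := iSup_le h

private lemma key_add {a b : K → ℂ} {φ χ : ℕ → K → ℂ} (hφ : IsDRep a φ) (hχ : IsDRep b χ) :
    DNorm (fun k => a k + b k) ≤ DBound φ + DBound χ := by
  set ρ : ℕ → K → ℂ := fun j => if j % 2 = 0 then φ (j / 2) else χ (j / 2) with hρ
  have h2 : ∀ m, ρ (2 * m) = φ m := by
    intro m
    have e1 : (2 * m) % 2 = 0 := by omega
    have e2 : (2 * m) / 2 = m := by omega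
    simp [hρ, e1, e2]
  have h3 : ∀ m, ρ (2 * m + 1) = χ m := by
    intro m
    have e1 : (2 * m + 1) % 2 = 1 := by omega
    have e2 : (2 * m + 1) / 2 = m := by omega
    simp [hρ, e1, e2]
  have hrep : IsDRep (fun k => a k + b k) ρ := by
    constructor
    · intro j
      simp only [hρ]
      split
      · exact hφ.1 _
      · exact hχ.1 _
    · intro k
      refine HasSum.even_add_odd ?_ ?_
      · have he : (fun m => ρ (2 * m) k) = fun m => φ m k := by
          funext m; rw [h2]
        rw [he]; exact hφ.2 k
      · have he : (fun m => ρ (2 * m + 1) k) = fun m => χ m k := by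
          funext m; rw [h3]
        rw [he]; exact hχ.2 k
  refine (dnorm_le_dbound hrep).trans (dbound_le fun k => ?_)
  rw [← tsum_even_add_odd (f := fun j => (‖ρ j k‖₊ : ℝ≥0∞)) ENNReal.summable ENNReal.summable]
  simp only [h2, h3]
  exact add_le_add (le_iSup (fun k => ∑' j, (‖φ j k‖₊ : ℝ≥0∞)) k)
    (le_iSup (fun k => ∑' j, (‖χ j k‖₊ : ℝ≥0∞)) k)

private lemma dnorm_add_le (a b : K → ℂ) :
    DNorm (fun k => a k + b k) ≤ DNorm a + DNorm b := by
  rcases eq_or_ne (DNorm a) ⊤ with ha | ha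
  · simp [ha]
  rcases eq_or_ne (DNorm b) ⊤ with hb | hb
  · simp [hb]
  refine ENNReal.le_of_forall_pos_le_add fun ε hε _ => ?_
  have hε2 : ((ε : ℝ≥0∞) / 2) ≠ 0 := by
    simp [ENNReal.div_eq_zero_iff, hε.ne']
  obtain ⟨φ, hφ, hφb⟩ := exists_rep_of_lt (ENNReal.lt_add_right ha hε2)
  obtain ⟨χ, hχ, hχb⟩ := exists_rep_of_lt (ENNReal.lt_add_right hb hε2)
  calc DNorm (fun k => a k + b k) ≤ DBound φ + DBound χ := key_add hφ hχ
    _ ≤ (DNorm a + ↑ε / 2) + (DNorm b + ↑ε / 2) := add_le_add hφb.le hχb.le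
    _ = DNorm a + DNorm b + ↑ε := by
        rw [add_add_add_comm, ENNReal.add_halves]

private lemma dnorm_comp_le {g ψ : K → ℂ} {L : ℝ≥0} {Φ : ℂ → ℂ}
    (hL : L ≠ 0) (hΦ : LipschitzWith L Φ) (h0 : Φ 0 = 0) (hψ : ∀ k, ψ k = Φ (g k)) :
    DNorm ψ ≤ (L : ℝ≥0∞) * DNorm g := by
  have core : ∀ φ : ℕ → K → ℂ, IsDRep g φ → DNorm ψ ≤ (L : ℝ≥0∞) * DBound φ := by
    intro φ hφ
    set s : ℕ → K → ℂ := fun N k => ∑ j ∈ Finset.range N, φ j k with hs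
    set ϑ : ℕ → K → ℂ := fun j k => Φ (s (j + 1) k) - Φ (s j k) with hϑ
    have hb : ∀ j k, (‖ϑ j k‖₊ : ℝ≥0∞) ≤ (L : ℝ≥0∞) * ‖φ j k‖₊ := by
      intro j k
      have h1 : s (j + 1) k - s j k = φ j k := Finset.sum_range_succ_sub_sum _
      calc (‖ϑ j k‖₊ : ℝ≥0∞) = edist (Φ (s (j + 1) k)) (Φ (s j k)) := by
            rw [edist_eq_enorm_sub, enorm_eq_nnnorm]
        _ ≤ (L : ℝ≥0∞) * edist (s (j + 1) k) (s j k) := hΦ _ _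
        _ = (L : ℝ≥0∞) * ‖φ j k‖₊ := by rw [edist_eq_enorm_sub, enorm_eq_nnnorm, h1]
    have hbd : ∀ k, (∑' j, (‖ϑ j k‖₊ : ℝ≥0∞)) ≤ (L : ℝ≥0∞) * DBound φ := by
      intro k
      calc (∑' j, (‖ϑ j k‖₊ : ℝ≥0∞)) ≤ ∑' j, (L : ℝ≥0∞) * ‖φ j k‖₊ :=
            ENNReal.tsum_le_tsum fun j => hb j k
        _ = (L : ℝ≥0∞) * ∑' j, (‖φ j k‖₊ : ℝ≥0∞) := ENNReal.tsum_mul_left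
        _ ≤ (L : ℝ≥0∞) * DBound φ :=
            mul_le_mul_right (le_iSup (fun k => ∑' j, (‖φ j k‖₊ : ℝ≥0∞)) k) _
    rcases eq_or_ne (DBound φ) ⊤ with hDb | hDb
    · rw [hDb, ENNReal.mul_top (by exact_mod_cast hL)]
      exact le_top
    have hsummable : ∀ k, Summable fun j => ϑ j k := by
      intro k
      refine Summable.of_nnnorm ?_
      rw [← ENNReal.tsum_coe_ne_top_iff_summable]
      exact ((hbd k).trans_lt (ENNReal.mul_lt_top ENNReal.coe_lt_top hDb.lt_top)).ne
    have hrep : IsDRep ψ ϑ := by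
      constructor
      · intro j
        have hc : ∀ N, Continuous (fun k => s N k) := fun N =>
          continuous_finset_sum _ fun i _ => hφ.1 i
        exact ((hΦ.continuous.comp (hc (j + 1))).sub (hΦ.continuous.comp (hc j)))
      · intro k
        have hsum := (hsummable k).hasSum
        have htel : ∀ N, ∑ j ∈ Finset.range N, ϑ j k = Φ (s N k) := by
          intro N
          have h4 := Finset.sum_range_sub (fun j => Φ (s j k)) N
          have h5 : s 0 k = 0 := Finset.sum_range_zero _
          rw [hϑ]
          simp only
          rw [h4, h5, h0, sub_zero]
        have hlim : Tendsto (fun N => Φ (s N k)) atTop (𝓝 (ψ k)) := by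
          rw [hψ k]
          exact (hΦ.continuous.tendsto (g k)).comp (hφ.2 k).tendsto_sum_nat
        have h2 : Tendsto (fun N => ∑ j ∈ Finset.range N, ϑ j k) atTop (𝓝 (ψ k)) := by
          simp only [htel]
          exact hlim
        have h3 : ∑' j, ϑ j k = ψ k := tendsto_nhds_unique hsum.tendsto_sum_nat h2
        rw [← h3]
        exact hsum
    exact (dnorm_le_dbound hrep).trans (dbound_le hbd)
  have hmul : (L : ℝ≥0∞) * DNorm g
      = ⨅ (φ : ℕ → K → ℂ) (_ : IsDRep g φ), (L : ℝ≥0∞) * DBound φ := by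
    rw [DNorm, ENNReal.mul_iInf_of_ne (by exact_mod_cast hL) ENNReal.coe_ne_top]
    refine iInf_congr fun φ => ?_
    rw [ENNReal.mul_iInf_of_ne (by exact_mod_cast hL) ENNReal.coe_ne_top]
  rw [hmul]
  exact le_iInf₂ fun φ hφ => core φ hφ

private lemma lipschitz_re_c : LipschitzWith 1 (fun z : ℂ => ((z.re : ℝ) : ℂ)) := by
  have hre1 : LipschitzWith 1 (fun z : ℂ => z.re) := by
    refine LipschitzWith.of_dist_le_mul fun x y => ?_
    rw [NNReal.coe_one, one_mul, Real.dist_eq, Complex.dist_eq, ← Complex.sub_re]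
    exact Complex.abs_re_le_norm _
  simpa [Function.comp_def] using Complex.isometry_ofReal.lipschitz.comp hre1

private lemma dnorm_re_le (g : K → ℂ) :
    DNorm (fun k => ((g k).re : ℂ)) ≤ DNorm g := by
  simpa using dnorm_comp_le (g := g) (ψ := fun k => ((g k).re : ℂ))
    (Φ := fun z : ℂ => ((z.re : ℝ) : ℂ)) one_ne_zero lipschitz_re_c (by simp) (fun k => rfl)

private lemma dnorm_neg_le (g : K → ℂ) :
    DNorm (fun k => -(g k)) ≤ DNorm g := by
  have hneg : LipschitzWith 1 (fun z : ℂ => -z) := by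
    refine LipschitzWith.of_dist_le_mul fun x y => ?_
    rw [NNReal.coe_one, one_mul, dist_neg_neg]
  simpa using dnorm_comp_le (g := g) (ψ := fun k => -(g k))
    (Φ := fun z : ℂ => -z) one_ne_zero hneg (by simp) (fun k => rfl)

private lemma exists_retraction {V : Set ℝ} (hV : V.Finite) (h0V : (0 : ℝ) ∈ V) {γ δ : ℝ}
    (hγ : 0 < γ) (hsep : ∀ v ∈ V, ∀ w ∈ V, v ≠ w → γ ≤ |v - w|)
    (hδ0 : 0 < δ) (hδγ : 2 * δ < γ) :
    ∃ h : ℝ → ℝ, LipschitzWith (Real.toNNReal (γ / (γ - 2 * δ))) h ∧ h 0 = 0 ∧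
      ∀ v ∈ V, ∀ t : ℝ, |t - v| ≤ δ → h t = v := by
  classical
  have hγδ : 0 < γ - 2 * δ := by linarith
  set S : Set ℝ := {t | ∃ v ∈ V, |t - v| ≤ δ} with hS
  set f₀ : ℝ → ℝ := fun t => if ht : ∃ v ∈ V, |t - v| ≤ δ then ht.choose else 0 with hf₀
  have hf₀spec : ∀ t ∈ S, f₀ t ∈ V ∧ |t - f₀ t| ≤ δ := by
    intro t ht
    have ht' : ∃ v ∈ V, |t - v| ≤ δ := ht
    have : f₀ t = ht'.choose := by
      simp only [hf₀]
      rw [dif_pos ht']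
    rw [this]
    exact ⟨ht'.choose_spec.1, ht'.choose_spec.2⟩
  have hlip : LipschitzOnWith (Real.toNNReal (γ / (γ - 2 * δ))) f₀ S := by
    rw [lipschitzOnWith_iff_dist_le_mul]
    intro x hx y hy
    obtain ⟨hxV, hxd⟩ := hf₀spec x hx
    obtain ⟨hyV, hyd⟩ := hf₀spec y hy
    rw [Real.coe_toNNReal _ (by positivity)]
    rcases eq_or_ne (f₀ x) (f₀ y) with he | he
    · rw [Real.dist_eq, he, sub_self, abs_zero]
      positivity
    · have hgap : γ ≤ |f₀ x - f₀ y| := hsep _ hxV _ hyV he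
      rw [Real.dist_eq, Real.dist_eq]
      have h1 : |f₀ x - f₀ y| ≤ |x - y| + 2 * δ := by
        have e : f₀ x - f₀ y = -(x - f₀ x) + (x - y) + (y - f₀ y) := by ring
        calc |f₀ x - f₀ y| ≤ |(-(x - f₀ x) + (x - y))| + |y - f₀ y| := by
              rw [e]; exact abs_add_le _ _
          _ ≤ |(-(x - f₀ x))| + |x - y| + |y - f₀ y| :=
              add_le_add_left (abs_add_le _ _) _
          _ ≤ |x - y| + 2 * δ := by
              rw [abs_neg]
              linarith
      rw [div_mul_eq_mul_div, le_div_iff₀ hγδ]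
      nlinarith [abs_nonneg (x - y)]
  obtain ⟨h, hh, hEq⟩ := hlip.extend_real
  have hSmem : ∀ v ∈ V, ∀ t : ℝ, |t - v| ≤ δ → t ∈ S := fun v hv t ht => ⟨v, hv, ht⟩
  have hval : ∀ v ∈ V, ∀ t : ℝ, |t - v| ≤ δ → h t = v := by
    intro v hv t ht
    have htS : t ∈ S := hSmem v hv t ht
    obtain ⟨hfV, hfd⟩ := hf₀spec t htS
    have : f₀ t = v := by
      by_contra hne
      have := hsep _ hfV _ hv hne
      have : |f₀ t - v| ≤ 2 * δ := by
        have e : f₀ t - v = -(t - f₀ t) + (t - v) := by ring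
        calc |f₀ t - v| ≤ |(-(t - f₀ t))| + |t - v| := by rw [e]; exact abs_add_le _ _
          _ ≤ 2 * δ := by rw [abs_neg]; linarith
      linarith
    rw [← hEq htS, this]
  refine ⟨h, hh, ?_, hval⟩
  have h00 : |(0 : ℝ) - 0| ≤ δ := by simp [hδ0.le]
  exact hval 0 h0V 0 h00

end AuxProof

/-- for real-valued `f ∈ SD(K)`, `‖f‖_D = ‖f‖_{B_{1/4}}`. -/
theorem stmt16 {K : Type u} [MetricSpace K] (f : K → ℝ)
    (hf : MemSD (fun k => (f k : ℂ))) :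
    DNorm (fun k => (f k : ℂ)) = B14Norm (fun k => (f k : ℂ)) := by
  set fc : K → ℂ := fun k => (f k : ℂ) with hfc
  refine le_antisymm ?_ ?_
  · -- hard direction : DNorm fc ≤ B14Norm fc
    rw [B14Norm]
    refine le_iInf₂ fun lam hlam => ?_
    obtain ⟨g, hg, hgu⟩ := hlam
    rcases eq_or_ne lam ⊤ with rfl | hlam_top
    · exact le_top
    refine ENNReal.le_of_forall_pos_le_add fun ε hε _ => ?_
    have hε4ne : (ε / 4 : NNReal) ≠ 0 := by
      refine div_ne_zero hε.ne' (by norm_num)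
    set ε4 : ℝ≥0∞ := ((ε / 4 : NNReal) : ℝ≥0∞) with hε4
    have hε4pos : 0 < ε4 := by
      rw [hε4]
      exact ENNReal.coe_pos.2 (pos_iff_ne_zero.2 hε4ne)
    obtain ⟨ψ₀, hψ₀fin, _hψ₀D, hψ₀close⟩ := hf.2 ε4 hε4pos
    set ρr : K → ℝ := fun k => (ψ₀ k).re with hρr
    set ψ : K → ℂ := fun k => ((ρr k : ℝ) : ℂ) with hψdef
    set r : K → ℂ := fun k => fc k - ψ k with hrdef
    -- DNorm r ≤ ε4
    have hr : DNorm r ≤ ε4 := by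
      have h1 : DNorm r ≤ DNorm (fc - ψ₀) := by
        have := dnorm_comp_le (K := K) (g := fc - ψ₀) (ψ := r)
          (Φ := fun z : ℂ => ((z.re : ℝ) : ℂ)) one_ne_zero lipschitz_re_c (by simp)
          (fun k => by
            simp only [hrdef, hψdef, hρr, hfc, Pi.sub_apply, Complex.sub_re,
              Complex.ofReal_re, Complex.ofReal_sub])
        simpa using this
      exact h1.trans hψ₀close.le
    -- the finite set of values, with min gap γ
    have hrangefin : (Set.range ρr).Finite := by
      have : Set.range ρr = Complex.re '' Set.range ψ₀ := by
        rw [hρr, ← Set.range_comp]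
        rfl
      rw [this]
      exact hψ₀fin.image _
    set V : Set ℝ := insert (0 : ℝ) (Set.range ρr) with hV
    have hVfin : V.Finite := hrangefin.insert 0
    have h0V : (0 : ℝ) ∈ V := Set.mem_insert 0 _
    classical
    set Vf : Finset ℝ := hVfin.toFinset with hVf
    set Pf : Finset ℝ := ((Vf ×ˢ Vf).filter fun p => p.1 ≠ p.2).image
      (fun p => |p.1 - p.2|) ∪ {1} with hPf
    have hPne : Pf.Nonempty := ⟨1, by simp [hPf]⟩
    set γ : ℝ := Pf.min' hPne with hγdef
    have hγpos : 0 < γ := by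
      rw [hγdef]
      rw [Finset.lt_min'_iff]
      intro y hy
      rw [hPf, Finset.mem_union] at hy
      rcases hy with hy | hy
      · obtain ⟨p, hp, rfl⟩ := Finset.mem_image.1 hy
        have hne := (Finset.mem_filter.1 hp).2
        exact abs_pos.2 (sub_ne_zero.2 hne)
      · simp only [Finset.mem_singleton] at hy
        rw [hy]; norm_num
    have hsep : ∀ v ∈ V, ∀ w ∈ V, v ≠ w → γ ≤ |v - w| := by
      intro v hv w hw hne
      refine Finset.min'_le _ _ ?_
      rw [hPf, Finset.mem_union]
      left
      refine Finset.mem_image.2 ⟨(v, w), ?_, rfl⟩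
      refine Finset.mem_filter.2 ⟨Finset.mem_product.2 ⟨?_, ?_⟩, hne⟩
      · exact hVfin.mem_toFinset.2 hv
      · exact hVfin.mem_toFinset.2 hw
    -- main estimate : for each η > 0, DNorm ψ ≤ (1 + η) * (lam + ε4)
    have main : ∀ η : NNReal, 0 < η → DNorm ψ ≤ (1 + (η : ℝ≥0∞)) * (lam + ε4) := by
      intro η hη
      have hηR : (0 : ℝ) < η := hη
      set δ : ℝ := (η * γ) / (2 * (1 + η)) with hδdef
      have hδ0 : 0 < δ := by
        rw [hδdef]
        positivity
      have h2δ : 2 * δ * (1 + (η : ℝ)) = η * γ := by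
        rw [hδdef]
        field_simp
      have hδγ : 2 * δ < γ := by nlinarith
      obtain ⟨h, hh, h00, hretr⟩ := exists_retraction hVfin h0V hγpos hsep hδ0 hδγ
      have hγδ : (0 : ℝ) < γ - 2 * δ := by linarith
      have hLb : (γ / (γ - 2 * δ) : ℝ) ≤ 1 + (η : ℝ) := by
        rw [div_le_iff₀ hγδ]
        nlinarith
      -- choose n with uniform δ-closeness
      rw [Metric.tendstoUniformly_iff] at hgu
      obtain ⟨n, hn⟩ := (hgu δ hδ0).exists
      set G : K → ℂ := fun k => ((g n k).re : ℂ) - r k with hGdef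
      have hGre : ∀ k, (G k).re = (g n k).re - (f k - ρr k) := by
        intro k
        simp [hGdef, hrdef, hψdef, hfc, Complex.sub_re, Complex.ofReal_re]
      have hclose : ∀ k, |(G k).re - ρr k| ≤ δ := by
        intro k
        have he : (G k).re - ρr k = -((fc k - g n k).re) := by
          rw [hGre k]
          simp [hfc, Complex.sub_re, Complex.ofReal_re]
          ring
        rw [he, abs_neg]
        calc |(fc k - g n k).re| ≤ ‖fc k - g n k‖ := Complex.abs_re_le_norm _
          _ = dist (fc k) (g n k) := (Complex.dist_eq _ _).symm
          _ ≤ δ := (hn k).le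
      have hψG : ∀ k, ψ k = ((h ((G k).re) : ℝ) : ℂ) := by
        intro k
        have hv : ρr k ∈ V := Set.mem_insert_of_mem _ ⟨k, rfl⟩
        rw [hretr (ρr k) hv ((G k).re) (hclose k)]
      -- the composed Lipschitz map
      set Lc : NNReal := Real.toNNReal (γ / (γ - 2 * δ)) with hLcdef
      have hLcne : Lc ≠ 0 := by
        rw [hLcdef]
        exact (Real.toNNReal_pos.2 (by positivity)).ne'
      have hre1 : LipschitzWith 1 (fun z : ℂ => z.re) := by
        refine LipschitzWith.of_dist_le_mul fun x y => ?_
        rw [NNReal.coe_one, one_mul, Real.dist_eq, Complex.dist_eq, ← Complex.sub_re]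
        exact Complex.abs_re_le_norm _
      have hΦ : LipschitzWith Lc (fun z : ℂ => ((h z.re : ℝ) : ℂ)) := by
        have := (Complex.isometry_ofReal.lipschitz.comp hh).comp hre1
        simpa [Function.comp_def] using this
      have hcomp := dnorm_comp_le (K := K) (g := G) (ψ := ψ)
        (Φ := fun z : ℂ => ((h z.re : ℝ) : ℂ)) hLcne hΦ (by simp [h00]) hψG
      -- DNorm G ≤ lam + ε4
      have hGn : DNorm G ≤ lam + ε4 := by
        have h1 : DNorm (fun k => ((g n k).re : ℂ)) ≤ DNorm (g n) := dnorm_re_le _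
        have h2 : DNorm (fun k => -(r k)) ≤ DNorm r := dnorm_neg_le _
        have h3 := dnorm_add_le (fun k => ((g n k).re : ℂ)) (fun k => -(r k))
        have hGeq : G = fun k => ((g n k).re : ℂ) + -(r k) := by
          funext k
          rw [hGdef]
          ring
        rw [hGeq]
        exact h3.trans (add_le_add (h1.trans (hg n).2) (h2.trans hr))
      have hL' : (Lc : ℝ≥0∞) ≤ 1 + (η : ℝ≥0∞) := by
        have e1 : (Lc : ℝ≥0∞) = ENNReal.ofReal (γ / (γ - 2 * δ)) := rfl
        have e2 : (1 : ℝ≥0∞) + (η : ℝ≥0∞) = ENNReal.ofReal (1 + (η : ℝ)) := by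
          rw [ENNReal.ofReal_add (by norm_num) (NNReal.coe_nonneg η)]
          simp [ENNReal.ofReal_coe_nnreal]
        rw [e1, e2]
        exact ENNReal.ofReal_le_ofReal hLb
      calc DNorm ψ ≤ (Lc : ℝ≥0∞) * DNorm G := hcomp
        _ ≤ (1 + (η : ℝ≥0∞)) * (lam + ε4) := mul_le_mul' hL' hGn
    -- let η → 0 : DNorm ψ ≤ (lam + ε4) + ε4
    have hAne : lam + ε4 ≠ ⊤ := by
      rw [hε4]
      exact ENNReal.add_ne_top.2 ⟨hlam_top, ENNReal.coe_ne_top⟩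
    have hψle : DNorm ψ ≤ (lam + ε4) + ε4 := by
      refine ENNReal.le_of_forall_pos_le_add fun ε' hε' _ => ?_
      set a : NNReal := (lam + ε4).toNNReal with hadef
      have hacoe : ((a : ℝ≥0∞)) = lam + ε4 := ENNReal.coe_toNNReal hAne
      set η : NNReal := ε' / (a + 1) with hηdef
      have hηpos : 0 < η := by
        rw [hηdef]
        positivity
      have hkey : (η : ℝ≥0∞) * (lam + ε4) ≤ (ε' : ℝ≥0∞) := by
        rw [← hacoe, ← ENNReal.coe_mul]
        refine ENNReal.coe_le_coe.2 ?_
        rw [hηdef]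
        calc ε' / (a + 1) * a ≤ ε' / (a + 1) * (a + 1) :=
              mul_le_mul_right (le_add_right le_rfl) _
          _ = ε' := div_mul_cancel₀ _ (by positivity)
      calc DNorm ψ ≤ (1 + (η : ℝ≥0∞)) * (lam + ε4) := main η hηpos
        _ = (lam + ε4) + (η : ℝ≥0∞) * (lam + ε4) := by rw [add_mul, one_mul]
        _ ≤ (lam + ε4) + (ε' : ℝ≥0∞) := add_le_add le_rfl hkey
        _ ≤ (lam + ε4) + ε4 + (ε' : ℝ≥0∞) := by
            exact add_le_add (le_add_right le_rfl) le_rfl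
    -- conclusion
    have hfc_eq : fc = fun k => ψ k + r k := by
      funext k
      rw [hrdef]
      ring
    have hfinal : DNorm fc ≤ ((lam + ε4) + ε4) + ε4 := by
      calc DNorm fc = DNorm (fun k => ψ k + r k) := by rw [← hfc_eq]
        _ ≤ DNorm ψ + DNorm r := dnorm_add_le ψ r
        _ ≤ ((lam + ε4) + ε4) + ε4 := add_le_add hψle hr
    refine hfinal.trans ?_
    have h3ε : ε4 + ε4 + ε4 ≤ (ε : ℝ≥0∞) := by
      rw [hε4, ← ENNReal.coe_add, ← ENNReal.coe_add]
      refine ENNReal.coe_le_coe.2 ?_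
      rw [← NNReal.coe_le_coe]
      push_cast
      linarith [NNReal.coe_nonneg ε]
    calc ((lam + ε4) + ε4) + ε4 = lam + (ε4 + ε4 + ε4) := by ring
      _ ≤ lam + (ε : ℝ≥0∞) := add_le_add le_rfl h3ε
  · -- easy direction : B14Norm fc ≤ DNorm fc
    rw [B14Norm]
    have hprop : ∃ g : ℕ → K → ℂ,
        (∀ n, MemD (g n) ∧ DNorm (g n) ≤ DNorm fc) ∧ TendstoUniformly g fc atTop := by
      refine ⟨fun _ => fc, fun _ => ⟨hf.1, le_rfl⟩, ?_⟩
      rw [Metric.tendstoUniformly_iff]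
      intro ε' hε'
      exact Filter.Eventually.of_forall fun n x => by simpa using hε'
    exact iInf_le_of_le (DNorm fc) (iInf_le_of_le hprop le_rfl)
end
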